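/- arXiv:1710.01782 — 4 statements merged into one kernel-verified Lean document; each statement's English description precedes it below -/
import Mathlib

section
/- Let (G(s),α) be a stable network with n agents and let a, b be two distinct vertices such that agent a buys an edge (a,a') with a' ≠ b. If d_G(a,b) ≥ 2 and there exists a shortest path tree T of G rooted at b such that either (a,a') is not an edge of T or a' is the parent of a in T, then distcost(a) ≤ distcost(b) + n − 3. Furthermore, if a also buys an edge (a,a'') with a'' ≠ a', a'' ≠ b, and (a,a'') is not an edge of T, then distcost(a) ≤ distcost(b) + n − 3 − α. -/
open scoped BigOperators

namespace NCG

variable {V : Type*} [Fintype V] [DecidableEq V]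

/-- The network induced by a strategy vector `st`: `{u,v}` is an edge iff (at least)
one of the endpoints buys it, i.e. `v ∈ st u` or `u ∈ st v`. -/
def graph (st : V → Finset V) : SimpleGraph V where
  Adj u v := u ≠ v ∧ (v ∈ st u ∨ u ∈ st v)
  symm := ⟨fun u v h => ⟨h.1.symm, h.2.symm⟩⟩
  loopless := ⟨fun u h => h.1 rfl⟩

open scoped Classical in
/-- The distance cost of agent `u`: the sum of the graph distances to all nodes if the
network is connected, and `⊤` otherwise. -/
noncomputable def distcost (st : V → Finset V) (u : V) : EReal :=
  if (graph st).Connected then (((∑ w : V, ((graph st).dist u w : ℝ)) : ℝ) : EReal) else ⊤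

/-- The cost of agent `u`: `α` per bought edge plus the distance cost. -/
noncomputable def cost (α : ℝ) (st : V → Finset V) (u : V) : EReal :=
  ((α * (st u).card : ℝ) : EReal) + distcost st u

/-- A network is stable (a pure Nash equilibrium) if no agent `u` can strictly
decrease her cost by unilaterally changing her own strategy set `st u`. -/
def Stable (α : ℝ) (st : V → Finset V) : Prop :=
  ∀ u : V, ∀ t : Finset V, u ∉ t → cost α st u ≤ cost α (Function.update st u t) u

/-- The social cost of a network: the sum of the costs of all agents. -/
noncomputable def socialCost (α : ℝ) (st : V → Finset V) : EReal :=
  ∑ u : V, cost α st u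

/-- The optimal (minimum) social cost over all strategy vectors on agent set `W`. -/
noncomputable def optCost (α : ℝ) (W : Type*) [Fintype W] [DecidableEq W] : EReal :=
  sInf {c : EReal | ∃ st : W → Finset W, (∀ u, u ∉ st u) ∧ c = socialCost α st}

/-- `T` is a shortest path tree of `G` rooted at `r`: a spanning tree of `G`
preserving all distances from `r`. -/
def IsSPT (G : SimpleGraph V) (r : V) (T : SimpleGraph V) : Prop :=
  T ≤ G ∧ T.IsTree ∧ ∀ x, T.dist r x = G.dist r x

/-- The subgraph of `G` induced on `S` is biconnected: it has at least 3 vertices,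
it is connected, and it has no cut vertex. -/
def IsBiconnectedOn (G : SimpleGraph V) (S : Set V) : Prop :=
  3 ≤ S.ncard ∧ (G.induce S).Connected ∧ ∀ x ∈ S, (G.induce (S \ {x})).Connected

/-- `S` induces a biconnected component of `G`: a maximal biconnected induced subgraph. -/
def IsBiconnectedComponent (G : SimpleGraph V) (S : Set V) : Prop :=
  IsBiconnectedOn G S ∧ ∀ S' : Set V, S ⊆ S' → IsBiconnectedOn G S' → S' = S

/-- `⟨v,u⟩` is a critical pair (with witnesses `v₁, v₂, u'` and biconnected component `H`)
of the network induced by the strategy vector `st`: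
(1) `v ∈ H` buys the two distinct non-bridge edges `(v,v₁)` and `(v,v₂)` with `v₁,v₂ ∈ H`;
(2) `u ∈ H`, `u ≠ v`, buys an edge `(u,u')` with `u' ∈ H`, `u' ≠ v`;
(3) `d(v,u) ≥ 2`;
(4) some shortest path from `v` to `u` uses the edge `(v,v₁)`;
(5) some shortest path from `v` to `u'` does not use the edge `(u,u')`. -/
def IsCriticalPair (st : V → Finset V) (H : Set V) (v u v₁ v₂ u' : V) : Prop :=
  IsBiconnectedComponent (graph st) H ∧
  v ∈ H ∧ v₁ ∈ H ∧ v₂ ∈ H ∧ v₁ ≠ v₂ ∧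
  v₁ ∈ st v ∧ v₂ ∈ st v ∧
  ¬ (graph st).IsBridge (Sym2.mk v v₁) ∧ ¬ (graph st).IsBridge (Sym2.mk v v₂) ∧
  u ∈ H ∧ u ≠ v ∧ u' ∈ H ∧ u' ≠ v ∧ u' ∈ st u ∧
  2 ≤ (graph st).dist v u ∧
  (∃ p : (graph st).Walk v u, p.IsPath ∧ p.length = (graph st).dist v u ∧
    Sym2.mk v v₁ ∈ p.edges) ∧
  (∃ p : (graph st).Walk v u', p.IsPath ∧ p.length = (graph st).dist v u' ∧
    Sym2.mk u u' ∉ p.edges)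

/-- A critical pair is strong if moreover some shortest path from `u` to `v₂`
does not use the edge `(v,v₂)`. -/
def IsStrongCriticalPair (st : V → Finset V) (H : Set V) (v u v₁ v₂ u' : V) : Prop :=
  IsCriticalPair st H v u v₁ v₂ u' ∧
  ∃ p : (graph st).Walk u v₂, p.IsPath ∧ p.length = (graph st).dist u v₂ ∧
    Sym2.mk v v₂ ∉ p.edges

/-- A cycle `c` in `G` is a min cycle if for every two vertices on the cycle, their
distance along the cycle equals their distance in `G`. -/
def IsMinCycle (G : SimpleGraph V) {a : V} (c : G.Walk a a) : Prop :=
  c.IsCycle ∧ ∀ (x : V) (hx : x ∈ c.toSubgraph.verts) (y : V) (hy : y ∈ c.toSubgraph.verts),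
    c.toSubgraph.coe.dist ⟨x, hx⟩ ⟨y, hy⟩ = G.dist x y

/-- A cycle `c` of the network induced by `st` is directed if, traversed in one of the
two possible directions, every edge of the cycle is bought by its tail vertex. -/
def IsDirectedCycle (st : V → Finset V) {a : V} (c : (graph st).Walk a a) : Prop :=
  c.IsCycle ∧
    ((∀ i < c.length, c.getVert (i + 1) ∈ st (c.getVert i)) ∨
     (∀ i < c.length, c.getVert i ∈ st (c.getVert (i + 1))))

/-- `c` is a centroid of (the subgraph of `G` induced on) `S`: every connected component
obtained from `S` by removing `c` contains at most `|S|/2` vertices. -/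
def IsCentroidOn (G : SimpleGraph V) (S : Set V) (c : V) : Prop :=
  c ∈ S ∧ ∀ x ∈ S, x ≠ c →
    2 * {y | y ∈ S ∧ ∃ p : G.Walk x y, c ∉ p.support ∧ ∀ z ∈ p.support, z ∈ S}.ncard
      ≤ S.ncard

end NCG

section Aux

open SimpleGraph

variable {V : Type*} [Fintype V] [DecidableEq V]

private lemma tree_path_length {T : SimpleGraph V} (ht : T.IsTree) {u v : V}
    (p : T.Walk u v) (hp : p.IsPath) : p.length = T.dist u v := by
  obtain ⟨q, hq, hql⟩ := ht.isConnected.exists_path_of_dist u v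
  rw [← hql]
  exact congrArg Walk.length ((ht.existsUnique_path u v).unique hp hq)

private lemma path_first_edge {G : SimpleGraph V} {a w c : V} (p : G.Walk a w)
    (hp : p.IsPath) (he : s(a, c) ∈ p.edges) :
    ∃ (h : G.Adj a c) (q : G.Walk c w), p = SimpleGraph.Walk.cons h q := by
  cases p with
  | nil => simp at he
  | cons h q =>
    rw [Walk.edges_cons, List.mem_cons] at he
    rcases he with he | he
    · obtain rfl : c = _ := Sym2.congr_right.mp he
      exact ⟨h, q, rfl⟩
    · exact absurd (q.fst_mem_support_of_mem_edges he)
        ((Walk.cons_isPath_iff h q).mp hp).2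

private lemma adj_update {st : V → Finset V} {a b : V} {F : Finset V} {x y : V}
    (hxy : (NCG.graph st).Adj x y) (hne : ∀ c ∈ F, s(x, y) ≠ s(a, c)) :
    (NCG.graph (Function.update st a (insert b (st a \ F)))).Adj x y := by
  obtain ⟨hne', hmem⟩ : x ≠ y ∧ (y ∈ st x ∨ x ∈ st y) := hxy
  refine (⟨hne', ?_⟩ : x ≠ y ∧ _)
  rcases hmem with h | h
  · by_cases hx : x = a
    · subst hx
      left
      rw [Function.update_self]
      exact Finset.mem_insert_of_mem (Finset.mem_sdiff.mpr
        ⟨h, fun hyF => hne y hyF rfl⟩)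
    · left; rwa [Function.update_of_ne hx]
  · by_cases hy : y = a
    · subst hy
      right
      rw [Function.update_self]
      refine Finset.mem_insert_of_mem (Finset.mem_sdiff.mpr ⟨h, fun hxF => ?_⟩)
      exact hne x hxF (Sym2.eq_swap)
    · right; rwa [Function.update_of_ne hy]

/-- Deviation walks: after swapping the bought edges towards `F` for an edge to `b`,
agent `a` can reach every `w` within `dist b w + 1`. -/
private lemma key_walk (st : V → Finset V) (a b : V) (hab : a ≠ b)
    (F : Finset V) (T : SimpleGraph V) (hT : NCG.IsSPT (NCG.graph st) b T)
    (hF : ∀ c ∈ F, ¬ T.Adj a c ∨ (T.Adj a c ∧ T.dist b c + 1 = T.dist b a))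
    (w : V) :
    ∃ q : (NCG.graph (Function.update st a (insert b (st a \ F)))).Walk a w,
      q.length ≤ (NCG.graph st).dist b w + 1 := by
  set G' := NCG.graph (Function.update st a (insert b (st a \ F))) with hG'
  obtain ⟨p, hp, hpl⟩ := hT.2.1.isConnected.exists_path_of_dist b w
  have hpd : p.length = (NCG.graph st).dist b w := by rw [hpl, hT.2.2 w]
  have hGab : G'.Adj a b := by
    refine (⟨hab, Or.inl ?_⟩ : a ≠ b ∧ _)
    rw [Function.update_self]
    exact Finset.mem_insert_self _ _
  have htrans : ∀ {x y : V} (q : T.Walk x y), (∀ c ∈ F, s(a, c) ∉ q.edges) →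
      ∀ e ∈ q.edges, e ∈ G'.edgeSet := by
    intro x y q hq e he
    have hT' : e ∈ T.edgeSet := q.edges_subset_edgeSet he
    revert he hT'
    induction e using Sym2.ind with
    | _ u v =>
      intro he hT'
      rw [SimpleGraph.mem_edgeSet] at hT' ⊢
      exact adj_update (hT.1 hT') (fun c hc hbad => hq c hc (hbad ▸ he))
  by_cases ha : a ∈ p.support
  · have hq : (p.dropUntil a ha).IsPath := hp.dropUntil ha
    have havoid : ∀ c ∈ F, s(a, c) ∉ (p.dropUntil a ha).edges := by
      intro c hc hce
      obtain ⟨hadj, q', hqe⟩ := path_first_edge (p.dropUntil a ha) hq hce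
      rcases hF c hc with hnadj | ⟨_, hparent⟩
      · exact hnadj hadj
      · have htk : (p.takeUntil a ha).IsPath := hp.takeUntil ha
        have hnd : ((p.takeUntil a ha).append (p.dropUntil a ha)).support.Nodup := by
          rw [p.take_spec ha]; exact hp.support_nodup
        rw [Walk.support_append] at hnd
        have hdisj := List.disjoint_of_nodup_append hnd
        have hct : c ∈ (p.dropUntil a ha).support.tail := by
          rw [hqe, Walk.support_cons, List.tail_cons]
          exact q'.start_mem_support
        have hcs : c ∉ (p.takeUntil a ha).support := fun h => hdisj h hct
        have hrev : (Walk.cons hadj.symm (p.takeUntil a ha).reverse).reverse.IsPath := by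
          apply Walk.IsPath.reverse
          rw [Walk.cons_isPath_iff]
          refine ⟨htk.reverse, ?_⟩
          rw [Walk.support_reverse, List.mem_reverse]
          exact hcs
        have h1 := tree_path_length hT.2.1 _ hrev
        have h2 := tree_path_length hT.2.1 _ htk
        rw [Walk.length_reverse, Walk.length_cons, Walk.length_reverse] at h1
        omega
    refine ⟨(p.dropUntil a ha).transfer G' (htrans _ havoid), ?_⟩
    rw [Walk.length_transfer]
    have := Walk.length_dropUntil_le p ha
    omega
  · have havoid : ∀ c ∈ F, s(a, c) ∉ p.edges :=
      fun c _ hce => ha (p.fst_mem_support_of_mem_edges hce)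
    refine ⟨Walk.cons hGab (p.transfer G' (htrans _ havoid)), ?_⟩
    rw [Walk.length_cons, Walk.length_transfer]
    omega

/-- Core estimate: the deviation of `a` (buying `b` instead of the vertices in `F`)
bounds `a`'s distance sum via stability. -/
private lemma core (α : ℝ) (st : V → Finset V) (hself : ∀ u, u ∉ st u)
    (hstable : NCG.Stable α st)
    (a b : V) (hab : a ≠ b) (hbst : b ∉ st a)
    (hd : 2 ≤ (NCG.graph st).dist a b)
    (F : Finset V) (T : SimpleGraph V) (hT : NCG.IsSPT (NCG.graph st) b T)
    (hF : ∀ c ∈ F, ¬ T.Adj a c ∨ (T.Adj a c ∧ T.dist b c + 1 = T.dist b a))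
    (hGc : (NCG.graph st).Connected) :
    (∑ w : V, ((NCG.graph st).dist a w : ℝ)) ≤
      α * ((insert b (st a \ F)).card : ℝ) - α * ((st a).card : ℝ) +
      (∑ w : V, ((NCG.graph st).dist b w : ℝ)) + (Fintype.card V : ℝ) - 3 := by
  classical
  set t : Finset V := insert b (st a \ F) with ht
  set G' := NCG.graph (Function.update st a t) with hG'
  have hkey := key_walk st a b hab F T hT hF
  have hreach : ∀ w, G'.Reachable a w := fun w => ⟨(hkey w).choose⟩
  have hconn' : G'.Connected := by
    have : Nonempty V := ⟨a⟩
    exact ⟨fun u v => (hreach u).symm.trans (hreach v)⟩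
  have hdist' : ∀ w, (G'.dist a w : ℝ) ≤ ((NCG.graph st).dist b w : ℝ) + 1 := by
    intro w
    obtain ⟨q, hq⟩ := hkey w
    have := le_trans (G'.dist_le q) hq
    exact_mod_cast this
  -- sum bound
  have hn : 1 ≤ Fintype.card V := Fintype.card_pos_iff.mpr ⟨a⟩
  have hdba : (2 : ℝ) ≤ ((NCG.graph st).dist b a : ℝ) := by
    rw [SimpleGraph.dist_comm]
    exact_mod_cast hd
  have hcard_erase : ((Finset.univ.erase a).card : ℝ) = (Fintype.card V : ℝ) - 1 := by
    rw [Finset.card_erase_of_mem (Finset.mem_univ a), Finset.card_univ]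
    push_cast [Nat.cast_sub hn]
    ring
  have hsum : (∑ w : V, (G'.dist a w : ℝ)) ≤
      (∑ w : V, ((NCG.graph st).dist b w : ℝ)) + (Fintype.card V : ℝ) - 3 := by
    have e1 : (∑ w : V, (G'.dist a w : ℝ)) =
        ∑ w ∈ Finset.univ.erase a, (G'.dist a w : ℝ) := by
      rw [← Finset.add_sum_erase _ _ (Finset.mem_univ a)]
      simp [SimpleGraph.dist_self]
    have e2 : (∑ w : V, ((NCG.graph st).dist b w : ℝ)) =
        ((NCG.graph st).dist b a : ℝ) +
          ∑ w ∈ Finset.univ.erase a, ((NCG.graph st).dist b w : ℝ) :=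
      (Finset.add_sum_erase _ _ (Finset.mem_univ a)).symm
    have e3 : ∑ w ∈ Finset.univ.erase a, (G'.dist a w : ℝ) ≤
        ∑ w ∈ Finset.univ.erase a, (((NCG.graph st).dist b w : ℝ) + 1) :=
      Finset.sum_le_sum fun w _ => hdist' w
    rw [Finset.sum_add_distrib, Finset.sum_const, nsmul_eq_mul, mul_one] at e3
    rw [e1]
    rw [e2] at *
    rw [hcard_erase] at e3
    linarith
  -- stability
  have hat : a ∉ t := by
    rw [ht, Finset.mem_insert]
    push_neg
    exact ⟨hab, fun h => hself a (Finset.mem_sdiff.mp h).1⟩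
  have hst := hstable a t hat
  simp only [NCG.cost, NCG.distcost] at hst
  rw [if_pos hGc, if_pos hconn'] at hst
  rw [Function.update_self, ← EReal.coe_add, ← EReal.coe_add,
    EReal.coe_le_coe_iff] at hst
  linarith

end Aux

/-- Let `(G(st),α)` be a stable network with `n` agents, `a ≠ b`, where `a`
buys an edge `(a,a')` with `a' ≠ b`, `d_G(a,b) ≥ 2`, and let `T` be a shortest path tree of
`G` rooted at `b` in which either `(a,a')` is not an edge or `a'` is the parent of `a`.
Then `distcost(a) ≤ distcost(b) + n − 3`; moreover if `a` also buys an edge `(a,a'')` with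
`a'' ≠ a'`, `a'' ≠ b` and `(a,a'')` not an edge of `T`, then
`distcost(a) ≤ distcost(b) + n − 3 − α`. -/
theorem distcost_bound_of_spt {V : Type*} [Fintype V] [DecidableEq V]
    (α : ℝ) (st : V → Finset V) (hself : ∀ u, u ∉ st u)
    (hstable : NCG.Stable α st)
    (a b a' : V) (hab : a ≠ b) (ha' : a' ∈ st a) (ha'b : a' ≠ b)
    (hd : 2 ≤ (NCG.graph st).dist a b)
    (T : SimpleGraph V) (hT : NCG.IsSPT (NCG.graph st) b T)
    (hcond : ¬ T.Adj a a' ∨ (T.Adj a a' ∧ T.dist b a' + 1 = T.dist b a)) :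
    NCG.distcost st a ≤ NCG.distcost st b + (((Fintype.card V : ℝ) - 3 : ℝ) : EReal) ∧
    (∀ a'' : V, a'' ∈ st a → a'' ≠ a' → a'' ≠ b → ¬ T.Adj a a'' →
      NCG.distcost st a ≤
        NCG.distcost st b + (((Fintype.card V : ℝ) - 3 - α : ℝ) : EReal)) := by
  classical
  by_cases hGc : (NCG.graph st).Connected
  swap
  · have hb : NCG.distcost st b = ⊤ := by
      simp only [NCG.distcost, if_neg hGc]
    constructor
    · rw [hb, EReal.top_add_of_ne_bot (EReal.coe_ne_bot _)]
      exact le_top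
    · intro a'' _ _ _ _
      rw [hb, EReal.top_add_of_ne_bot (EReal.coe_ne_bot _)]
      exact le_top
  · have hbst : b ∉ st a := by
      intro h
      have hadj : (NCG.graph st).Adj a b := (⟨hab, Or.inl h⟩ : a ≠ b ∧ _)
      have := (NCG.graph st).dist_le (SimpleGraph.Walk.cons hadj SimpleGraph.Walk.nil)
      simp only [SimpleGraph.Walk.length_cons, SimpleGraph.Walk.length_nil] at this
      omega
    have hca : 1 ≤ (st a).card := Finset.card_pos.mpr ⟨a', ha'⟩
    have hda : NCG.distcost st a = ((∑ w : V, ((NCG.graph st).dist a w : ℝ) : ℝ) : EReal) := by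
      simp only [NCG.distcost, if_pos hGc]
    have hdb : NCG.distcost st b = ((∑ w : V, ((NCG.graph st).dist b w : ℝ) : ℝ) : EReal) := by
      simp only [NCG.distcost, if_pos hGc]
    constructor
    · -- part 1 : F = {a'}
      have hF : ∀ c ∈ ({a'} : Finset V),
          ¬ T.Adj a c ∨ (T.Adj a c ∧ T.dist b c + 1 = T.dist b a) := by
        intro c hc
        rw [Finset.mem_singleton] at hc
        subst hc
        exact hcond
      have hcore := core α st hself hstable a b hab hbst hd {a'} T hT hF hGc
      have hsub : ({a'} : Finset V) ⊆ st a := Finset.singleton_subset_iff.mpr ha'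
      have hcard : ((insert b (st a \ ({a'} : Finset V))).card : ℝ) = ((st a).card : ℝ) := by
        have hbns : b ∉ st a \ ({a'} : Finset V) := fun h =>
          hbst (Finset.mem_sdiff.mp h).1
        rw [Finset.card_insert_of_notMem hbns, Finset.card_sdiff_of_subset hsub,
          Finset.card_singleton]
        have : (st a).card - 1 + 1 = (st a).card := Nat.sub_add_cancel hca
        exact_mod_cast congrArg (Nat.cast : ℕ → ℝ) this
      rw [hcard] at hcore
      rw [hda, hdb, ← EReal.coe_add, EReal.coe_le_coe_iff]
      linarith
    · -- part 2 : F = {a', a''}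
      intro a'' ha'' hne hbne hnT
      have hF : ∀ c ∈ ({a', a''} : Finset V),
          ¬ T.Adj a c ∨ (T.Adj a c ∧ T.dist b c + 1 = T.dist b a) := by
        intro c hc
        rw [Finset.mem_insert, Finset.mem_singleton] at hc
        rcases hc with rfl | rfl
        · exact hcond
        · exact Or.inl hnT
      have hcore := core α st hself hstable a b hab hbst hd {a', a''} T hT hF hGc
      have hsub : ({a', a''} : Finset V) ⊆ st a := by
        rw [Finset.insert_subset_iff, Finset.singleton_subset_iff]
        exact ⟨ha', ha''⟩
      have hc2 : ({a', a''} : Finset V).card = 2 := by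
        rw [Finset.card_insert_of_notMem (by simpa using hne.symm),
          Finset.card_singleton]
      have hca2 : 2 ≤ (st a).card := hc2 ▸ Finset.card_le_card hsub
      have hcard : ((insert b (st a \ ({a', a''} : Finset V))).card : ℝ) =
          ((st a).card : ℝ) - 1 := by
        have hbns : b ∉ st a \ ({a', a''} : Finset V) := fun h =>
          hbst (Finset.mem_sdiff.mp h).1
        rw [Finset.card_insert_of_notMem hbns, Finset.card_sdiff_of_subset hsub, hc2]
        have : (st a).card - 2 + 1 = (st a).card - 1 := by omega
        rw [this, Nat.cast_sub hca]
        push_cast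
        ring
      rw [hcard] at hcore
      rw [hda, hdb, ← EReal.coe_add, EReal.coe_le_coe_iff]
      have hexp : α * (((st a).card : ℝ) - 1) - α * ((st a).card : ℝ) = -α := by ring
      linarith [hcore, hexp.symm ▸ hcore]
end

section
/- If ⟨v,u⟩ is a critical pair of a network (G,α) (with associated vertices v₁, v₂, u' as in the definition), then there exists a shortest path tree T of G rooted at v such that either the edge (u,u') is not an edge of T or u' is the parent of u in T. -/
open scoped BigOperators

section Helpers
open SimpleGraph
set_option linter.unusedSectionVars false
variable {V : Type*} [Fintype V] [DecidableEq V]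

/-- From a shortest walk `p : v → x` with `x ≠ v`, extract a "parent" `y` of `x`:
a neighbor of `x` with distance one less, such that the edge `{x,y}` is on `p`. -/
lemma exists_parent_of_walk {G : SimpleGraph V} {v x : V} (p : G.Walk v x)
    (hlen : p.length = G.dist v x) (hx : x ≠ v) :
    ∃ y, G.Adj x y ∧ G.dist v y + 1 = G.dist v x ∧ Sym2.mk x y ∈ p.edges := by
  have hnn : ¬ p.reverse.Nil := by
    rw [SimpleGraph.Walk.not_nil_iff_lt_length]
    have : p.reverse.length = p.length := SimpleGraph.Walk.length_reverse p
    have hne : 0 < G.dist v x := by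
      have : G.dist v x ≠ 0 := by
        intro h0
        have := (SimpleGraph.Walk.eq_of_length_eq_zero (by omega : p.length = 0))
        exact hx this.symm
      omega
    omega
  obtain ⟨y, hadj, q, hq⟩ := SimpleGraph.Walk.not_nil_iff.mp hnn
  have hqlen : q.length + 1 = G.dist v x := by
    have h1 : p.reverse.length = p.length := SimpleGraph.Walk.length_reverse p
    have h2 : p.reverse.length = q.length + 1 := by rw [hq]; simp
    omega
  have hdy : G.dist v y ≤ q.length := by
    have := SimpleGraph.dist_le q.reverse
    simpa using this
  have hdx : G.dist v x ≤ G.dist v y + 1 := by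
    have hr : G.Reachable v y := ⟨q.reverse⟩
    obtain ⟨w, hw⟩ := hr.exists_walk_length_eq_dist
    have := SimpleGraph.dist_le (w.concat hadj.symm)
    rwa [SimpleGraph.Walk.length_concat, hw] at this
  have hedge : Sym2.mk x y ∈ p.edges := by
    have : Sym2.mk x y ∈ p.reverse.edges := by
      rw [hq]; simp
    rw [SimpleGraph.Walk.edges_reverse] at this
    simpa using this
  exact ⟨y, hadj, by omega, hedge⟩

/-- Parent existence in a connected graph. -/
lemma exists_parent {G : SimpleGraph V} {v x : V} (hconn : G.Connected) (hx : x ≠ v) :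
    ∃ y, G.Adj x y ∧ G.dist v y + 1 = G.dist v x := by
  obtain ⟨p, hp⟩ := (hconn v x).exists_walk_length_eq_dist
  obtain ⟨y, h1, h2, _⟩ := exists_parent_of_walk p hp hx
  exact ⟨y, h1, h2⟩


end Helpers

/-- If `⟨v,u⟩` is a critical pair of a (connected) network, then there is
a shortest path tree `T` rooted at `v` in which either the edge `(u,u')` does not occur or
`u'` is the parent of `u`. -/
theorem critical_pair_spt_rooted_at_v {V : Type*} [Fintype V] [DecidableEq V]
    (α : ℝ) (st : V → Finset V) (hself : ∀ u, u ∉ st u)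
    (hconn : (NCG.graph st).Connected)
    (H : Set V) (v u v₁ v₂ u' : V)
    (hcp : NCG.IsCriticalPair st H v u v₁ v₂ u') :
    ∃ T : SimpleGraph V, NCG.IsSPT (NCG.graph st) v T ∧
      (¬ T.Adj u u' ∨ (T.Adj u u' ∧ T.dist v u' + 1 = T.dist v u)) := by
  classical
  set G := NCG.graph st with hG
  obtain ⟨hbc, hvH, hv1H, hv2H, hv12, hv1st, hv2st, hbr1, hbr2, huH, huv, hu'H, hu'v,
    hu'st, hdvu, hpath1, hpath2⟩ := hcp
  obtain ⟨p₀, hp₀path, hp₀len, hp₀edge⟩ := hpath2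
  have huu' : u ≠ u' := fun h => hself u (h ▸ hu'st)
  -- parent of u' avoiding u
  obtain ⟨w, hw_adj, hw_dist, hw_edge⟩ := exists_parent_of_walk p₀ hp₀len hu'v
  have hw_ne : w ≠ u := by
    intro h
    apply hp₀edge
    have : Sym2.mk u' w = Sym2.mk u u' := by rw [h, Sym2.eq_swap]
    rwa [this] at hw_edge
  -- choose parents
  have key : ∀ x : V, ∃ y : V, (x ≠ v → G.Adj x y ∧ G.dist v y + 1 = G.dist v x) ∧
      (x = u' → y ≠ u) ∧ (x = u → G.dist v u' + 1 = G.dist v u → y = u') := by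
    intro x
    by_cases hxv : x = v
    · exact ⟨v, fun h => absurd hxv h, fun h => absurd (h.symm.trans hxv) hu'v,
        fun h _ => absurd (h.symm.trans hxv) huv⟩
    · by_cases hxu' : x = u'
      · subst hxu'
        exact ⟨w, fun _ => ⟨hw_adj, hw_dist⟩, fun _ => hw_ne,
          fun h _ => absurd h.symm huu'⟩
      · by_cases hxu : x = u ∧ G.dist v u' + 1 = G.dist v u
        · obtain ⟨hxu, hde⟩ := hxu
          subst hxu
          refine ⟨u', fun _ => ⟨⟨huu', Or.inl hu'st⟩, hde⟩, fun h => absurd h hxu', fun _ _ => rfl⟩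
        · obtain ⟨y, hy1, hy2⟩ := exists_parent hconn hxv
          exact ⟨y, fun _ => ⟨hy1, hy2⟩, fun h => absurd h hxu',
            fun h1 h2 => absurd ⟨h1, h2⟩ hxu⟩
  choose p hp1 hp2 hp3 using key
  -- the tree
  set T : SimpleGraph V := {
    Adj := fun a b => (a ≠ v ∧ b = p a) ∨ (b ≠ v ∧ a = p b)
    symm := ⟨fun a b h => by tauto⟩
    loopless := ⟨fun a h => by
      rcases h with ⟨ha, hpa⟩ | ⟨ha, hpa⟩ <;>
      · have h2 := (hp1 a ha).1
        rw [← hpa] at h2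
        exact G.loopless.irrefl a h2⟩ } with hT
  have hTadj : ∀ a b : V, T.Adj a b ↔ (a ≠ v ∧ b = p a) ∨ (b ≠ v ∧ a = p b) := fun a b => Iff.rfl
  have hTle : T ≤ G := by
    intro a b hab
    rcases hab with ⟨ha, hpa⟩ | ⟨hb, hpb⟩
    · exact hpa ▸ (hp1 a ha).1
    · exact (hpb ▸ (hp1 b hb).1).symm
  have hadj_parent : ∀ x : V, x ≠ v → T.Adj (p x) x := fun x hx => Or.inr ⟨hx, rfl⟩
  -- reachability
  have hreach : ∀ x : V, T.Reachable v x := by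
    have : ∀ n : ℕ, ∀ x : V, G.dist v x = n → T.Reachable v x := by
      intro n
      induction n using Nat.strong_induction_on with
      | _ n ih =>
        intro x hx
        by_cases hxv : x = v
        · subst hxv; rfl
        · have h1 := (hp1 x hxv).2
          have h2 : G.dist v (p x) < n := by omega
          exact (ih _ h2 _ rfl).trans (hadj_parent x hxv).reachable
    exact fun x => this _ x rfl
  have hTconn : T.Connected := by
    rw [SimpleGraph.connected_iff]
    exact ⟨fun a b => (hreach a).symm.trans (hreach b), ⟨v⟩⟩
  -- distances
  have hdist : ∀ x : V, T.dist v x = G.dist v x := by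
    have hle : ∀ n : ℕ, ∀ x : V, G.dist v x = n → T.dist v x ≤ G.dist v x := by
      intro n
      induction n using Nat.strong_induction_on with
      | _ n ih =>
        intro x hx
        by_cases hxv : x = v
        · subst hxv; rw [SimpleGraph.dist_self]; omega
        · have h1 := (hp1 x hxv).2
          have h2 : G.dist v (p x) < n := by omega
          obtain ⟨wp, hwp⟩ := (hreach (p x)).exists_walk_length_eq_dist
          have h3 := SimpleGraph.dist_le (wp.concat (hadj_parent x hxv))
          rw [SimpleGraph.Walk.length_concat, hwp] at h3
          have h4 := ih _ h2 _ rfl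
          omega
    intro x
    exact le_antisymm (hle _ x rfl) ((hreach x).dist_anti hTle)
  -- acyclicity
  have hTacyclic : T.IsAcyclic := by
    intro a c hc
    obtain ⟨x, hxs, hxmax⟩ := Finset.exists_max_image c.support.toFinset
      (fun y => G.dist v y) ⟨a, by simp⟩
    rw [List.mem_toFinset] at hxs
    have hxmax' : ∀ y ∈ c.support, G.dist v y ≤ G.dist v x := fun y hy =>
      hxmax y (List.mem_toFinset.mpr hy)
    have hc' : (c.rotate x hxs).IsCycle := hc.rotate hxs
    have hsupp : ∀ y ∈ (c.rotate x hxs).support.tail, y ∈ c.support := by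
      intro y hy
      have := (SimpleGraph.Walk.support_rotate c x hxs).mem_iff.mp hy
      exact List.mem_of_mem_tail this
    obtain ⟨b, hadjb, q, hq⟩ := SimpleGraph.Walk.not_nil_iff.mp hc'.not_nil
    rw [hq, SimpleGraph.Walk.cons_isCycle_iff] at hc'
    obtain ⟨hqpath, hqedge⟩ := hc'
    have hbmem : b ∈ c.support := by
      apply hsupp; rw [hq]
      simpa using q.start_mem_support
    -- last vertex
    have hqnn : ¬ q.reverse.Nil := by
      rw [SimpleGraph.Walk.not_nil_iff_lt_length, SimpleGraph.Walk.length_reverse]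
      rcases q with _ | _
      · exact absurd rfl hadjb.ne'
      · simp
    obtain ⟨b', hadjb', q2, hq2⟩ := SimpleGraph.Walk.not_nil_iff.mp hqnn
    have hb'edge : Sym2.mk x b' ∈ q.edges := by
      have : Sym2.mk x b' ∈ q.reverse.edges := by rw [hq2]; simp
      rw [SimpleGraph.Walk.edges_reverse] at this
      simpa using this
    have hbb' : b ≠ b' := by
      intro h
      exact hqedge (h ▸ hb'edge)
    have hb'mem : b' ∈ c.support := by
      apply hsupp; rw [hq]
      have : b' ∈ q.reverse.support := by rw [hq2]; simpa using q2.start_mem_support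
      rw [SimpleGraph.Walk.support_reverse] at this
      simpa using this
    -- both neighbors must equal p x
    have hparent : ∀ y : V, T.Adj x y → y ∈ c.support → y = p x := by
      intro y hadj hymem
      rcases hadj with ⟨_, h2⟩ | ⟨h1, h2⟩
      · exact h2
      · exfalso
        have := (hp1 y h1).2
        rw [← h2] at this
        have := hxmax' y hymem
        omega
    exact hbb' ((hparent b hadjb hbmem).trans (hparent b' hadjb' hb'mem).symm)
  refine ⟨T, ⟨hTle, ⟨hTconn, hTacyclic⟩, hdist⟩, ?_⟩
  by_cases hcase : G.dist v u' + 1 = G.dist v u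
  · right
    refine ⟨Or.inl ⟨huv, (hp3 u rfl hcase).symm⟩, ?_⟩
    rw [hdist, hdist]; exact hcase
  · left
    rintro (⟨h1, h2⟩ | ⟨h1, h2⟩)
    · have := (hp1 u h1).2
      rw [← h2] at this
      exact hcase this
    · exact hp2 u' rfl h2.symm
end

section
/- Let (T,α) be a stable (pure Nash equilibrium) network whose induced graph T is a tree on n vertices, rooted at a centroid c of T, and let u, v be two vertices of T with u, v ≠ c such that agent u buys the edge (u,v) in T. Then d_T(c,u) < d_T(c,v), i.e., u is the parent of v in T. Furthermore, if T̄ denotes the subtree of T rooted at v, then v is a centroid of T̄. -/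
open scoped BigOperators

namespace NCGAux

open SimpleGraph NCG

variable {V : Type*} [Fintype V] [DecidableEq V]

section TreeLemmas

variable {G : SimpleGraph V}

/-- Splitting a geodesic at a support vertex gives additivity of distances. -/
lemma dist_split (hG : G.Connected) {a b : V} (p : G.Walk a b)
    (hp : p.length = G.dist a b) {x : V} (hx : x ∈ p.support) :
    G.dist a x + G.dist x b = G.dist a b := by
  have h1 : G.dist a x ≤ (p.takeUntil x hx).length := dist_le _
  have h2 : G.dist x b ≤ (p.dropUntil x hx).length := dist_le _
  have h3 : (p.takeUntil x hx).length + (p.dropUntil x hx).length = p.length := by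
    have := congrArg Walk.length (p.take_spec hx)
    rwa [Walk.length_append] at this
  have h4 : G.dist a b ≤ G.dist a x + G.dist x b := hG.dist_triangle
  omega

/-- In a tree, for an edge `a ~ b`, every vertex is strictly closer to exactly one
of the endpoints. -/
lemma side_total (hG : G.Connected) (hU : ∀ ⦃a b : V⦄ (p q : G.Path a b), p = q)
    {a b : V} (hab : G.Adj a b) (w : V) :
    G.dist b w = G.dist a w + 1 ∨ G.dist a w = G.dist b w + 1 := by
  have hba : G.dist b a = 1 := dist_eq_one_iff_adj.mpr hab.symm
  have hab1 : G.dist a b = 1 := dist_eq_one_iff_adj.mpr hab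
  have t1 : G.dist b w ≤ G.dist b a + G.dist a w := hG.dist_triangle
  have t2 : G.dist a w ≤ G.dist a b + G.dist b w := hG.dist_triangle
  have hne : G.dist a w ≠ G.dist b w := by
    intro heq
    obtain ⟨P, hP, hPl⟩ := hG.exists_path_of_dist w a
    obtain ⟨Q, hQ, hQl⟩ := hG.exists_path_of_dist w b
    have hwa : G.dist w a = G.dist a w := dist_comm
    have hwb : G.dist w b = G.dist b w := dist_comm
    have hbP : b ∉ P.support := by
      intro hb
      have hsp := dist_split hG P hPl hb
      omega
    have hP' : (P.concat hab).IsPath := by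
      rw [Walk.isPath_def, Walk.support_concat, ← List.concat_eq_append]
      exact List.Nodup.concat hbP hP.support_nodup
    have huniq := hU ⟨P.concat hab, hP'⟩ ⟨Q, hQ⟩
    have hlen : (P.concat hab).length = Q.length := by
      rw [show (P.concat hab) = Q from congrArg Subtype.val huniq]
    rw [Walk.length_concat] at hlen
    omega
  omega

/-- Support of a geodesic starting at `a` stays on the `a`-side of the edge `a ~ b`. -/
lemma support_side_from (hG : G.Connected) (hU : ∀ ⦃a b : V⦄ (p q : G.Path a b), p = q)
    {a b : V} (hab : G.Adj a b) {w : V}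
    (hw : G.dist b w = G.dist a w + 1) {p : G.Walk a w} (hp : p.length = G.dist a w)
    {x : V} (hx : x ∈ p.support) : G.dist b x = G.dist a x + 1 := by
  have hsplit := dist_split hG p hp hx
  rcases side_total hG hU hab x with h | h
  · exact h
  · exfalso
    have t : G.dist b w ≤ G.dist b x + G.dist x w := hG.dist_triangle
    omega

/-- If adjacent vertices lie on opposite sides of the tree edge `a ~ b`, they are `a` and `b`. -/
lemma crossing_adj (hG : G.Connected) (hU : ∀ ⦃a b : V⦄ (p q : G.Path a b), p = q)
    {a b : V} (hab : G.Adj a b) {w z : V}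
    (hw : G.dist b w = G.dist a w + 1) (hz : G.dist a z = G.dist b z + 1)
    (hwz : G.Adj w z) : w = a ∧ z = b := by
  have hwz1 : G.dist w z = 1 := dist_eq_one_iff_adj.mpr hwz
  have hzw1 : G.dist z w = 1 := dist_eq_one_iff_adj.mpr hwz.symm
  have t1 : G.dist a z ≤ G.dist a w + G.dist w z := hG.dist_triangle
  have t2 : G.dist b w ≤ G.dist b z + G.dist z w := hG.dist_triangle
  have heq : G.dist b z = G.dist a w := by omega
  obtain ⟨P, hP, hPl⟩ := hG.exists_path_of_dist a w
  obtain ⟨Q, hQ, hQl⟩ := hG.exists_path_of_dist z b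
  have hPside : ∀ x ∈ P.support, G.dist b x = G.dist a x + 1 := fun x hx =>
    support_side_from hG hU hab hw hPl hx
  have hQside : ∀ x ∈ Q.support, G.dist a x = G.dist b x + 1 := by
    intro x hx
    have hx' : x ∈ Q.reverse.support := by
      rw [Walk.support_reverse]; exact List.mem_reverse.mpr hx
    have hlen : Q.reverse.length = G.dist b z := by
      rw [Walk.length_reverse, hQl, dist_comm]
    exact support_side_from hG hU hab.symm hz hlen hx'
  have hRpath : (P.append (Walk.cons hwz Q)).IsPath := by
    rw [Walk.isPath_def, Walk.support_append, Walk.support_cons, List.tail_cons]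
    refine List.Nodup.append hP.support_nodup hQ.support_nodup ?_
    intro x hxP hxQ
    have h1 := hPside x hxP
    have h2 := hQside x hxQ
    omega
  have huniq := hU ⟨P.append (Walk.cons hwz Q), hRpath⟩ (Path.singleton hab)
  have hlen : (P.append (Walk.cons hwz Q)).length = 1 := by
    rw [show (P.append (Walk.cons hwz Q)) = (Path.singleton hab).1 from
      congrArg Subtype.val huniq]
    simp [Path.singleton]
  rw [Walk.length_append, Walk.length_cons] at hlen
  have hk : G.dist a w = 0 := by omega
  have hk2 : G.dist b z = 0 := by omega
  exact ⟨(hG.dist_eq_zero_iff.mp hk).symm, (hG.dist_eq_zero_iff.mp hk2).symm⟩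

/-- Any walk between opposite sides of the tree edge `a ~ b` crosses that edge. -/
lemma walk_crossing (hG : G.Connected) (hU : ∀ ⦃a b : V⦄ (p q : G.Path a b), p = q)
    {a b : V} (hab : G.Adj a b) {w z : V} (p : G.Walk w z)
    (hw : G.dist b w = G.dist a w + 1) (hz : G.dist a z = G.dist b z + 1) :
    s(a, b) ∈ p.edges := by
  induction p with
  | nil => omega
  | @cons w y z h q ih =>
    rcases side_total hG hU hab y with hy | hy
    · rw [Walk.edges_cons]
      exact List.mem_cons_of_mem _ (ih hy hz)
    · obtain ⟨rfl, rfl⟩ := crossing_adj hG hU hab hw hy h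
      simp

/-- Distance across the tree edge `a ~ b`. -/
lemma dist_cross (hG : G.Connected) (hU : ∀ ⦃a b : V⦄ (p q : G.Path a b), p = q)
    {a b : V} (hab : G.Adj a b) {w z : V}
    (hw : G.dist b w = G.dist a w + 1) (hz : G.dist a z = G.dist b z + 1) :
    G.dist w z = G.dist w a + 1 + G.dist b z := by
  obtain ⟨P, hP, hPl⟩ := hG.exists_path_of_dist w z
  have he := walk_crossing hG hU hab P hw hz
  have ha : a ∈ P.support := P.fst_mem_support_of_mem_edges he
  have hsplit := dist_split hG P hPl ha
  have h1 : G.dist w a = G.dist a w := dist_comm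
  have h2 : G.dist a z = G.dist b z + 1 := hz
  omega

/-- The support of a geodesic between two vertices on the `a`-side of the tree edge
`a ~ b` stays on the `a`-side. -/
lemma support_side (hG : G.Connected) (hU : ∀ ⦃a b : V⦄ (p q : G.Path a b), p = q)
    {a b : V} (hab : G.Adj a b) {w z : V}
    (hw : G.dist b w = G.dist a w + 1) (hz : G.dist b z = G.dist a z + 1)
    {p : G.Walk w z} (hp : p.length = G.dist w z)
    {x : V} (hx : x ∈ p.support) : G.dist b x = G.dist a x + 1 := by
  rcases side_total hG hU hab x with h | h
  · exact h
  exfalso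
  have h1 := dist_split hG p hp hx
  have h2 := dist_cross hG hU hab hw h
  have h3 := dist_cross hG hU hab hz h
  have h4 : G.dist x z = G.dist z x := dist_comm
  have t : G.dist w z ≤ G.dist w a + G.dist a z := hG.dist_triangle
  have h5 : G.dist z a = G.dist a z := dist_comm
  omega

end TreeLemmas

/-- **Key deviation lemma.** In a stable tree network, if `u` buys the edge `(u,v)` and
`t ≠ u` is adjacent to `v`, then swapping the edge `(u,v)` for `(u,t)` must not pay off:
summing over the `v`-side of the edge `(u,v)`, the distances from `v` are at most the
distances from `t`. -/
lemma key (α : ℝ) (st : V → Finset V) (hself : ∀ u, u ∉ st u)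
    (hstable : Stable α st) (htree : (graph st).IsTree)
    (u v t : V) (hbuy : v ∈ st u) (hvt : (graph st).Adj v t) (htu : t ≠ u) :
    ∑ w ∈ Finset.univ.filter
        (fun w => (graph st).dist u w = (graph st).dist v w + 1),
      (graph st).dist v w ≤
    ∑ w ∈ Finset.univ.filter
        (fun w => (graph st).dist u w = (graph st).dist v w + 1),
      (graph st).dist t w := by
  classical
  set G := graph st with hGdef
  have hG : G.Connected := htree.isConnected
  have hU : ∀ ⦃a b : V⦄ (p q : G.Path a b), p = q :=
    isAcyclic_iff_path_unique.mp htree.IsAcyclic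
  have huv_ne : u ≠ v := fun h => hself u (h ▸ hbuy)
  have huv : G.Adj u v := (⟨huv_ne, Or.inl hbuy⟩ : u ≠ v ∧ (v ∈ st u ∨ u ∈ st v))
  have hvt1 : G.dist v t = 1 := dist_eq_one_iff_adj.mpr hvt
  have htB : G.dist u t = G.dist v t + 1 := by
    rcases side_total hG hU huv t with h | h
    · exfalso
      have h0 : G.dist u t = 0 := by omega
      exact htu (hG.dist_eq_zero_iff.mp h0).symm
    · exact h
  have hut2 : G.dist u t = 2 := by omega
  have htnotst : t ∉ st u := by
    intro h
    have hadj : G.Adj u t := (⟨fun h' => htu h'.symm, Or.inl h⟩ : u ≠ t ∧ (t ∈ st u ∨ u ∈ st t))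
    have := dist_eq_one_iff_adj.mpr hadj
    omega
  set s' : Finset V := insert t ((st u).erase v) with hs'
  have hunots' : u ∉ s' := by
    rw [hs', Finset.mem_insert]
    push_neg
    exact ⟨fun h => htu h.symm, fun h => hself u (Finset.mem_of_mem_erase h)⟩
  have hcard : s'.card = (st u).card := by
    rw [hs', Finset.card_insert_of_notMem (fun h => htnotst (Finset.mem_of_mem_erase h)),
      Finset.card_erase_of_mem hbuy]
    have : 0 < (st u).card := Finset.card_pos.mpr ⟨v, hbuy⟩
    omega
  set st' : V → Finset V := Function.update st u s' with hst'
  have hstu' : st' u = s' := Function.update_self u s' st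
  have hst'ne : ∀ x, x ≠ u → st' x = st x := fun x hx => Function.update_of_ne hx _ _
  have hG'ut : (graph st').Adj u t :=
    (⟨fun h => htu h.symm, Or.inl (by rw [hstu', hs']; exact Finset.mem_insert_self _ _)⟩ :
      u ≠ t ∧ (t ∈ st' u ∨ u ∈ st' t))
  have hpreserve : ∀ x y : V, G.Adj x y → s(x, y) ≠ s(u, v) → (graph st').Adj x y := by
    intro x y hxy hne
    refine (⟨hxy.1, ?_⟩ : x ≠ y ∧ (y ∈ st' x ∨ x ∈ st' y))
    rcases hxy.2 with h | h
    · by_cases hx : x = u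
      · subst hx
        left
        rw [hstu', hs']
        have hyv : y ≠ v := fun h' => hne (by rw [h'])
        exact Finset.mem_insert_of_mem (Finset.mem_erase.mpr ⟨hyv, h⟩)
      · left; rw [hst'ne x hx]; exact h
    · by_cases hy : y = u
      · subst hy
        right
        rw [hstu', hs']
        have hxv : x ≠ v := fun h' => hne (by rw [h']; exact Sym2.eq_swap)
        exact Finset.mem_insert_of_mem (Finset.mem_erase.mpr ⟨hxv, h⟩)
      · right; rw [hst'ne y hy]; exact h
  have hedge : ∀ {x y : V} (p : G.Walk x y), s(u, v) ∉ p.edges →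
      ∀ e ∈ p.edges, e ∈ (graph st').edgeSet := by
    intro x y p hsuv e he
    have heG : e ∈ G.edgeSet := p.edges_subset_edgeSet he
    induction e with
    | _ x' y' =>
      exact (hpreserve x' y' heG (fun h => hsuv (h ▸ he))).symm.symm
  -- upper bounds in the modified graph, and reachability from `u`
  have hua : ∀ w : V, G.dist v w = G.dist u w + 1 →
      (graph st').Reachable u w ∧ (graph st').dist u w ≤ G.dist u w := by
    intro w hw
    obtain ⟨P, hP, hPl⟩ := hG.exists_path_of_dist u w
    have hvP : v ∉ P.support := by
      intro hvP
      have := support_side_from hG hU huv hw hPl hvP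
      have : G.dist v v = 0 := dist_self
      omega
    have hsuv : s(u, v) ∉ P.edges := fun h => hvP (P.snd_mem_support_of_mem_edges h)
    let P' := P.transfer (graph st') (hedge P hsuv)
    refine ⟨⟨P'⟩, ?_⟩
    have := dist_le P'
    rwa [Walk.length_transfer, hPl] at this
  have hub : ∀ w : V, G.dist u w = G.dist v w + 1 →
      (graph st').Reachable u w ∧ (graph st').dist u w ≤ 1 + G.dist t w := by
    intro w hw
    obtain ⟨Q, hQ, hQl⟩ := hG.exists_path_of_dist t w
    have huQ : u ∉ Q.support := by
      intro huQ
      have := support_side hG hU huv.symm htB hw hQl huQ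
      have : G.dist u u = 0 := dist_self
      have : G.dist v u = 1 := dist_eq_one_iff_adj.mpr huv.symm
      omega
    have hsuv : s(u, v) ∉ Q.edges := fun h => huQ (Q.fst_mem_support_of_mem_edges h)
    let Q' := Walk.cons hG'ut (Q.transfer (graph st') (hedge Q hsuv))
    refine ⟨⟨Q'⟩, ?_⟩
    have := dist_le Q'
    rwa [Walk.length_cons, Walk.length_transfer, hQl, Nat.add_comm] at this
  have hreach : ∀ w : V, (graph st').Reachable u w := by
    intro w
    rcases side_total hG hU huv w with h | h
    · exact (hua w h).1
    · exact (hub w h).1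
  have hconn' : (graph st').Connected := by
    rw [connected_iff]
    exact ⟨fun x y => (hreach x).symm.trans (hreach y), ⟨u⟩⟩
  -- use stability
  have hstab := hstable u s' hunots'
  rw [cost, cost, distcost, distcost] at hstab
  rw [if_pos (show (graph st).Connected from hG), if_pos hconn', Function.update_self, hcard] at hstab
  rw [← EReal.coe_add, ← EReal.coe_add, EReal.coe_le_coe_iff] at hstab
  have hsumR : (∑ w : V, ((graph st).dist u w : ℝ)) ≤
      ∑ w : V, ((graph st').dist u w : ℝ) := by linarith
  have hsumN : (∑ w : V, G.dist u w) ≤ ∑ w : V, (graph st').dist u w := by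
    exact_mod_cast hsumR
  -- split the sums
  set pB : V → Prop := fun w => G.dist u w = G.dist v w + 1 with hpB
  have hsplit1 : (∑ w ∈ Finset.univ.filter pB, G.dist u w) +
      ∑ w ∈ Finset.univ.filter (fun w => ¬ pB w), G.dist u w = ∑ w : V, G.dist u w :=
    Finset.sum_filter_add_sum_filter_not _ _ _
  have hsplit2 : (∑ w ∈ Finset.univ.filter pB, (graph st').dist u w) +
      ∑ w ∈ Finset.univ.filter (fun w => ¬ pB w), (graph st').dist u w =
      ∑ w : V, (graph st').dist u w :=
    Finset.sum_filter_add_sum_filter_not _ _ _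
  have e1 : ∑ w ∈ Finset.univ.filter pB, G.dist u w =
      (∑ w ∈ Finset.univ.filter pB, G.dist v w) + (Finset.univ.filter pB).card := by
    rw [Finset.sum_congr rfl (fun w hw => (Finset.mem_filter.mp hw).2),
      Finset.sum_add_distrib, Finset.sum_const, smul_eq_mul, mul_one]
  have e2 : ∑ w ∈ Finset.univ.filter pB, (graph st').dist u w ≤
      (Finset.univ.filter pB).card + ∑ w ∈ Finset.univ.filter pB, G.dist t w := by
    calc ∑ w ∈ Finset.univ.filter pB, (graph st').dist u w
        ≤ ∑ w ∈ Finset.univ.filter pB, (1 + G.dist t w) :=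
          Finset.sum_le_sum (fun w hw => (hub w (Finset.mem_filter.mp hw).2).2)
      _ = (Finset.univ.filter pB).card + ∑ w ∈ Finset.univ.filter pB, G.dist t w := by
          rw [Finset.sum_add_distrib, Finset.sum_const, smul_eq_mul, mul_one]
  have e3 : ∑ w ∈ Finset.univ.filter (fun w => ¬ pB w), (graph st').dist u w ≤
      ∑ w ∈ Finset.univ.filter (fun w => ¬ pB w), G.dist u w := by
    refine Finset.sum_le_sum (fun w hw => ?_)
    have hw' := (Finset.mem_filter.mp hw).2
    rcases side_total hG hU huv w with h | h
    · exact (hua w h).2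
    · exact absurd h hw'
  show (∑ w ∈ Finset.univ.filter pB, G.dist v w) ≤
      ∑ w ∈ Finset.univ.filter pB, G.dist t w
  omega

/-- From a sum inequality where the summands differ by exactly one in opposite directions
on the two parts, the cardinalities of the parts compare. -/
lemma filter_card_le {s : Finset V} {f g : V → ℕ} {p : V → Prop} [DecidablePred p]
    (hfg : ∑ w ∈ s, f w ≤ ∑ w ∈ s, g w)
    (h1 : ∀ w ∈ s, p w → g w + 1 = f w)
    (h2 : ∀ w ∈ s, ¬ p w → f w + 1 = g w) :
    (s.filter p).card ≤ (s.filter (fun w => ¬ p w)).card := by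
  have e1 : ∑ w ∈ s.filter p, f w = (∑ w ∈ s.filter p, g w) + (s.filter p).card := by
    rw [show ∑ w ∈ s.filter p, f w = ∑ w ∈ s.filter p, (g w + 1) from Finset.sum_congr rfl
      (fun w hw => (h1 w (Finset.mem_filter.mp hw).1 (Finset.mem_filter.mp hw).2).symm)]
    rw [Finset.sum_add_distrib, Finset.sum_const, smul_eq_mul, mul_one]
  have e2 : ∑ w ∈ s.filter (fun w => ¬ p w), g w =
      (∑ w ∈ s.filter (fun w => ¬ p w), f w) + (s.filter (fun w => ¬ p w)).card := by
    rw [show ∑ w ∈ s.filter (fun w => ¬ p w), g w =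
        ∑ w ∈ s.filter (fun w => ¬ p w), (f w + 1) from Finset.sum_congr rfl
      (fun w hw => (h2 w (Finset.mem_filter.mp hw).1 (Finset.mem_filter.mp hw).2).symm)]
    rw [Finset.sum_add_distrib, Finset.sum_const, smul_eq_mul, mul_one]
  have s1 : (∑ w ∈ s.filter p, f w) + ∑ w ∈ s.filter (fun w => ¬ p w), f w = ∑ w ∈ s, f w :=
    Finset.sum_filter_add_sum_filter_not _ _ _
  have s2 : (∑ w ∈ s.filter p, g w) + ∑ w ∈ s.filter (fun w => ¬ p w), g w = ∑ w ∈ s, g w :=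
    Finset.sum_filter_add_sum_filter_not _ _ _
  omega

/-- Every vertex at positive distance admits a neighbour one step closer to the target. -/
lemma exists_step {G : SimpleGraph V} (hG : G.Connected) {a b : V} (hne : b ≠ a) :
    ∃ t, G.Adj a t ∧ G.dist t b + 1 = G.dist a b := by
  obtain ⟨p, hp, hpl⟩ := hG.exists_path_of_dist a b
  cases p with
  | nil => exact absurd rfl hne
  | cons h q =>
    rename_i y
    refine ⟨y, h, ?_⟩
    have d1 : G.dist y b ≤ q.length := dist_le q
    have d2 : G.dist a b ≤ G.dist a y + G.dist y b := hG.dist_triangle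
    have d3 : G.dist a y = 1 := dist_eq_one_iff_adj.mpr h
    have d4 : q.length + 1 = G.dist a b := by
      simpa using hpl
    omega

lemma main (α : ℝ) (st : V → Finset V) (hself : ∀ u, u ∉ st u)
    (hstable : Stable α st)
    (htree : (graph st).IsTree)
    (c : V) (hc : IsCentroidOn (graph st) Set.univ c)
    (u v : V) (hu : u ≠ c) (hv : v ≠ c) (hbuy : v ∈ st u) :
    (graph st).dist c u < (graph st).dist c v ∧
    IsCentroidOn (graph st)
      {x : V | (graph st).dist c x = (graph st).dist c v + (graph st).dist v x}
      v := by
  classical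
  set G := graph st with hGdef
  have hG : G.Connected := htree.isConnected
  have hU : ∀ ⦃a b : V⦄ (p q : G.Path a b), p = q :=
    isAcyclic_iff_path_unique.mp htree.IsAcyclic
  have huv_ne : u ≠ v := fun h => hself u (h ▸ hbuy)
  have huv : G.Adj u v := (⟨huv_ne, Or.inl hbuy⟩ : u ≠ v ∧ (v ∈ st u ∨ u ∈ st v))
  have huv1 : G.dist u v = 1 := dist_eq_one_iff_adj.mpr huv
  have hvu1 : G.dist v u = 1 := dist_eq_one_iff_adj.mpr huv.symm
  have hcu : G.dist c u = G.dist u c := dist_comm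
  have hcv : G.dist c v = G.dist v c := dist_comm
  -- ### Part 1: `u` is the parent of `v`.
  have h1 : G.dist c u < G.dist c v := by
    by_contra hcon
    have hcB : G.dist u c = G.dist v c + 1 := by
      rcases side_total hG hU huv c with h | h
      · omega
      · exact h
    obtain ⟨y, hady, hdyc⟩ := exists_step hG (fun h : c = v => hv h.symm)
    have hdvy : G.dist v y = 1 := dist_eq_one_iff_adj.mpr hady
    have hdyv : G.dist y v = 1 := dist_eq_one_iff_adj.mpr hady.symm
    have hyu : y ≠ u := by
      intro h
      rw [h] at hdyc
      omega
    have hkey := key α st hself hstable htree u v y hbuy hady hyu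
    rw [← hGdef] at hkey
    -- `y` lies on the `v`-side of the edge `(u,v)`
    have hyB : G.dist u y = G.dist v y + 1 := by
      rcases side_total hG hU huv y with h | h
      · exfalso
        have h0 : G.dist u y = 0 := by omega
        exact hyu (hG.dist_eq_zero_iff.mp h0).symm
      · exact h
    -- everything on the `u`-side of `(u,v)` lies on the `v`-side of `(v,y)`
    have hAQ : ∀ w : V, ¬ (G.dist u w = G.dist v w + 1) →
        G.dist y w = G.dist v w + 1 := by
      intro w hw
      have hwA : G.dist v w = G.dist u w + 1 := by
        rcases side_total hG hU huv w with h | h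
        · exact h
        · exact absurd h hw
      have hcross := dist_cross hG hU huv hwA hyB
      have c1 : G.dist w y = G.dist y w := dist_comm
      have c2 : G.dist w u = G.dist u w := dist_comm
      omega
    have hcQ : ¬ (G.dist y c = G.dist v c + 1) := by omega
    have huB : ¬ (G.dist u u = G.dist v u + 1) := by
      have : G.dist u u = 0 := dist_self
      omega
    have hvQ : G.dist y v = G.dist v v + 1 := by
      have : G.dist v v = 0 := dist_self
      omega
    -- comparison of the two halves of the `v`-side of `(u,v)`
    have hcount : ((Finset.univ.filter (fun w => G.dist u w = G.dist v w + 1)).filter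
        (fun w => ¬ (G.dist y w = G.dist v w + 1))).card ≤
        ((Finset.univ.filter (fun w => G.dist u w = G.dist v w + 1)).filter
        (fun w => ¬ ¬ (G.dist y w = G.dist v w + 1))).card := by
      refine filter_card_le hkey ?_ ?_
      · intro w _ hw
        rcases side_total hG hU hady w with h | h
        · exact absurd h hw
        · omega
      · intro w _ hw
        rw [not_not] at hw
        omega
    have hQQ : ((Finset.univ.filter (fun w => G.dist u w = G.dist v w + 1)).filter
        (fun w => ¬ ¬ (G.dist y w = G.dist v w + 1))) =
        ((Finset.univ.filter (fun w => G.dist u w = G.dist v w + 1)).filter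
        (fun w => G.dist y w = G.dist v w + 1)) := by
      ext w
      simp only [Finset.mem_filter, not_not]
    rw [hQQ] at hcount
    -- the `v`-side of `(v,y)` as a subset of the component of `v` avoiding `c`
    have hsub : (↑(Finset.univ.filter (fun w => G.dist y w = G.dist v w + 1)) : Set V) ⊆
        {z : V | z ∈ (Set.univ : Set V) ∧ ∃ p : G.Walk v z, c ∉ p.support ∧
          ∀ w ∈ p.support, w ∈ (Set.univ : Set V)} := by
      intro z hz
      have hzQ : G.dist y z = G.dist v z + 1 :=
        (Finset.mem_filter.mp (Finset.mem_coe.mp hz)).2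
      obtain ⟨P, hP, hPl⟩ := hG.exists_path_of_dist v z
      refine ⟨Set.mem_univ _, P, ?_, fun _ _ => Set.mem_univ _⟩
      intro hcP
      exact hcQ (support_side hG hU hady hvQ hzQ hPl hcP)
    have h2Q : 2 * (Finset.univ.filter (fun w => G.dist y w = G.dist v w + 1)).card ≤
        Fintype.card V := by
      have hQle : (Finset.univ.filter (fun w => G.dist y w = G.dist v w + 1)).card ≤
          Set.ncard {z : V | z ∈ (Set.univ : Set V) ∧ ∃ p : G.Walk v z, c ∉ p.support ∧
            ∀ w ∈ p.support, w ∈ (Set.univ : Set V)} := by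
        rw [← Set.ncard_coe_finset]
        exact Set.ncard_le_ncard hsub (Set.toFinite _)
      have hn : (Set.univ : Set V).ncard = Fintype.card V := by
        rw [Set.ncard_univ, Nat.card_eq_fintype_card]
      calc 2 * (Finset.univ.filter (fun w => G.dist y w = G.dist v w + 1)).card
          ≤ 2 * Set.ncard {z : V | z ∈ (Set.univ : Set V) ∧ ∃ p : G.Walk v z,
              c ∉ p.support ∧ ∀ w ∈ p.support, w ∈ (Set.univ : Set V)} :=
            Nat.mul_le_mul_left 2 hQle
        _ ≤ (Set.univ : Set V).ncard := hc.2 v (Set.mem_univ v) hv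
        _ = Fintype.card V := hn
    -- counting
    have hsplitB : (Finset.univ.filter (fun w => G.dist u w = G.dist v w + 1)).card +
        (Finset.univ.filter (fun w => ¬ (G.dist u w = G.dist v w + 1))).card =
        Fintype.card V := by
      rw [Finset.card_filter_add_card_filter_not, Finset.card_univ]
    have hBsplit : ((Finset.univ.filter (fun w => G.dist u w = G.dist v w + 1)).filter
        (fun w => G.dist y w = G.dist v w + 1)).card +
        ((Finset.univ.filter (fun w => G.dist u w = G.dist v w + 1)).filter
        (fun w => ¬ (G.dist y w = G.dist v w + 1))).card =
        (Finset.univ.filter (fun w => G.dist u w = G.dist v w + 1)).card := by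
      rw [Finset.card_filter_add_card_filter_not]
    have hQsplit : (Finset.univ.filter (fun w => G.dist y w = G.dist v w + 1)) =
        ((Finset.univ.filter (fun w => G.dist u w = G.dist v w + 1)).filter
        (fun w => G.dist y w = G.dist v w + 1)) ∪
        (Finset.univ.filter (fun w => ¬ (G.dist u w = G.dist v w + 1))) := by
      ext w
      simp only [Finset.mem_filter, Finset.mem_union, Finset.mem_univ, true_and]
      constructor
      · intro hw
        by_cases h : G.dist u w = G.dist v w + 1
        · exact Or.inl ⟨h, hw⟩
        · exact Or.inr h
      · rintro (⟨_, h2⟩ | h)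
        · exact h2
        · exact hAQ w h
    have hQcard : (Finset.univ.filter (fun w => G.dist y w = G.dist v w + 1)).card =
        ((Finset.univ.filter (fun w => G.dist u w = G.dist v w + 1)).filter
        (fun w => G.dist y w = G.dist v w + 1)).card +
        (Finset.univ.filter (fun w => ¬ (G.dist u w = G.dist v w + 1))).card := by
      rw [hQsplit, Finset.card_union_of_disjoint]
      refine Finset.disjoint_left.mpr ?_
      intro w hw1 hw2
      exact (Finset.mem_filter.mp hw2).2 (Finset.mem_filter.mp
        (Finset.mem_filter.mp hw1).1).2
    have huA : u ∈ Finset.univ.filter (fun w => ¬ (G.dist u w = G.dist v w + 1)) :=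
      Finset.mem_filter.mpr ⟨Finset.mem_univ _, huB⟩
    have hA1 : 1 ≤ (Finset.univ.filter
        (fun w => ¬ (G.dist u w = G.dist v w + 1))).card :=
      Finset.card_pos.mpr ⟨u, huA⟩
    omega
  -- ### Part 2: `v` is a centroid of the subtree rooted at `v`.
  have hcA : G.dist v c = G.dist u c + 1 := by
    rcases side_total hG hU huv c with h | h
    · exact h
    · omega
  refine ⟨h1, ?_, ?_⟩
  · show G.dist c v = G.dist c v + G.dist v v
    have : G.dist v v = 0 := dist_self
    omega
  intro x hxS hxv
  have hSB : ∀ z : V, (G.dist c z = G.dist c v + G.dist v z) ↔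
      (G.dist u z = G.dist v z + 1) := by
    intro z
    constructor
    · intro hz
      rcases side_total hG hU huv z with h | h
      · exfalso
        have t : G.dist c z ≤ G.dist c u + G.dist u z := hG.dist_triangle
        omega
      · exact h
    · intro hz
      have hcross := dist_cross hG hU huv hcA hz
      omega
  have hxB : G.dist u x = G.dist v x + 1 := (hSB x).mp hxS
  obtain ⟨t, hadt, hdtx⟩ := exists_step hG (fun h : x = v => hxv h)
  have hdvt : G.dist v t = 1 := dist_eq_one_iff_adj.mpr hadt
  have hdtv : G.dist t v = 1 := dist_eq_one_iff_adj.mpr hadt.symm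
  have htu : t ≠ u := by
    intro h
    rw [h] at hdtx
    omega
  have hkey := key α st hself hstable htree u v t hbuy hadt htu
  rw [← hGdef] at hkey
  -- `u` lies on the `v`-side of the edge `(v,t)`
  have huE : G.dist t u = G.dist v u + 1 := by
    rcases side_total hG hU hadt u with h | h
    · exact h
    · exfalso
      have h0 : G.dist t u = 0 := by omega
      exact htu (hG.dist_eq_zero_iff.mp h0)
  -- the `t`-side of `(v,t)` is contained in the `v`-side of `(u,v)`
  have hDB : ∀ w : V, G.dist v w = G.dist t w + 1 → G.dist u w = G.dist v w + 1 := by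
    intro w hw
    have hcross := dist_cross hG hU hadt.symm hw huE
    have c1 : G.dist w u = G.dist u w := dist_comm
    have c2 : G.dist w t = G.dist t w := dist_comm
    omega
  have hxD : G.dist v x = G.dist t x + 1 := by omega
  -- comparison of the two halves of the `v`-side of `(u,v)`
  have hcount : ((Finset.univ.filter (fun w => G.dist u w = G.dist v w + 1)).filter
      (fun w => G.dist v w = G.dist t w + 1)).card ≤
      ((Finset.univ.filter (fun w => G.dist u w = G.dist v w + 1)).filter
      (fun w => ¬ (G.dist v w = G.dist t w + 1))).card := by
    refine filter_card_le hkey ?_ ?_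
    · intro w _ hw
      omega
    · intro w _ hw
      rcases side_total hG hU hadt w with h | h
      · omega
      · exact absurd h hw
  -- the component of `x` avoiding `v` is contained in the `t`-side of `(v,t)`
  have hsub : {z : V | z ∈ {x' : V | G.dist c x' = G.dist c v + G.dist v x'} ∧
      ∃ p : G.Walk x z, v ∉ p.support ∧ ∀ w ∈ p.support,
        w ∈ {x' : V | G.dist c x' = G.dist c v + G.dist v x'}} ⊆
      (↑((Finset.univ.filter (fun w => G.dist u w = G.dist v w + 1)).filter
      (fun w => G.dist v w = G.dist t w + 1)) : Set V) := by
    intro z hz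
    obtain ⟨hzS, P, hvP, _⟩ := hz
    have hzB : G.dist u z = G.dist v z + 1 := (hSB z).mp hzS
    have hzD : G.dist v z = G.dist t z + 1 := by
      rcases side_total hG hU hadt z with h | h
      · exfalso
        have hcross := walk_crossing hG hU hadt.symm P hxD h
        exact hvP (P.snd_mem_support_of_mem_edges hcross)
      · exact h
    exact Finset.mem_coe.mpr (Finset.mem_filter.mpr
      ⟨Finset.mem_filter.mpr ⟨Finset.mem_univ _, hzB⟩, hzD⟩)
  have hcomp : Set.ncard {z : V | z ∈ {x' : V | G.dist c x' = G.dist c v + G.dist v x'} ∧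
      ∃ p : G.Walk x z, v ∉ p.support ∧ ∀ w ∈ p.support,
        w ∈ {x' : V | G.dist c x' = G.dist c v + G.dist v x'}} ≤
      ((Finset.univ.filter (fun w => G.dist u w = G.dist v w + 1)).filter
      (fun w => G.dist v w = G.dist t w + 1)).card := by
    rw [← Set.ncard_coe_finset]
    exact Set.ncard_le_ncard hsub (Set.toFinite _)
  have hScard : Set.ncard {x' : V | G.dist c x' = G.dist c v + G.dist v x'} =
      (Finset.univ.filter (fun w => G.dist u w = G.dist v w + 1)).card := by
    rw [← Set.ncard_coe_finset]
    congr 1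
    ext w
    simp only [Finset.coe_filter, Set.mem_setOf_eq, Finset.mem_univ, true_and]
    exact hSB w
  have hBsplit : ((Finset.univ.filter (fun w => G.dist u w = G.dist v w + 1)).filter
      (fun w => G.dist v w = G.dist t w + 1)).card +
      ((Finset.univ.filter (fun w => G.dist u w = G.dist v w + 1)).filter
      (fun w => ¬ (G.dist v w = G.dist t w + 1))).card =
      (Finset.univ.filter (fun w => G.dist u w = G.dist v w + 1)).card := by
    rw [Finset.card_filter_add_card_filter_not]
  have hfinal : 2 * ((Finset.univ.filter (fun w => G.dist u w = G.dist v w + 1)).filter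
      (fun w => G.dist v w = G.dist t w + 1)).card ≤
      Set.ncard {x' : V | G.dist c x' = G.dist c v + G.dist v x'} := by
    rw [hScard]
    omega
  exact le_trans (Nat.mul_le_mul_left 2 hcomp) hfinal

end NCGAux

/-- Let `(T,α)` be a stable tree network rooted at a centroid `c`, and let
`u, v ≠ c` be vertices such that agent `u` buys the edge `(u,v)`. Then
`d_T(c,u) < d_T(c,v)` (i.e. `u` is the parent of `v`), and `v` is a centroid of the subtree
of `T` rooted at `v`. -/
theorem centroid_parent_child {V : Type*} [Fintype V] [DecidableEq V]
    (α : ℝ) (st : V → Finset V) (hself : ∀ u, u ∉ st u)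
    (hstable : NCG.Stable α st)
    (htree : (NCG.graph st).IsTree)
    (c : V) (hc : NCG.IsCentroidOn (NCG.graph st) Set.univ c)
    (u v : V) (hu : u ≠ c) (hv : v ≠ c) (hbuy : v ∈ st u) :
    (NCG.graph st).dist c u < (NCG.graph st).dist c v ∧
    NCG.IsCentroidOn (NCG.graph st)
      {x : V | (NCG.graph st).dist c x = (NCG.graph st).dist c v + (NCG.graph st).dist v x}
      v := by
  exact NCGAux.main α st hself hstable htree c hc u v hu hv hbuy
end

section
/- Let (T,α) be a stable (pure Nash equilibrium) network whose induced graph T is a tree on n vertices, rooted at a centroid c of T; let u be a child of c in T and let v be a leaf of T contained in the subtree of T rooted at u. Let c_1,…,c_k be the vertices along the path in T between c_0 = u and c_k = v, where c_{i+1} is the child of c_i, and for every i = 1,…,k let n_i = |{x ∈ V : d_T(c_i,x) < d_T(c_j,x) for all j ≠ i}|. Then for every i = 1,…,k, Σ_{j=1}^{i} n_j ≥ n·Σ_{j=1}^{i} 1/2^j. -/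
open scoped BigOperators

section SubtreeSizeBoundAux

set_option linter.unusedSectionVars false

open SimpleGraph

variable {V : Type*} [Fintype V] [DecidableEq V] {G : SimpleGraph V}

private lemma path_eq (ht : G.IsTree) {x y : V} {p q : G.Walk x y}
    (hp : p.IsPath) (hq : q.IsPath) : p = q := by
  have := isAcyclic_iff_path_unique.mp ht.IsAcyclic (v := x) (w := y) ⟨p, hp⟩ ⟨q, hq⟩
  exact congrArg Subtype.val this

private lemma dist_split (hG : G.Connected) {x y z : V}
    {p : G.Walk x y} (hlen : p.length = G.dist x y) (hz : z ∈ p.support) :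
    G.dist x z + G.dist z y = G.dist x y := by
  have h1 : G.dist x z ≤ (p.takeUntil z hz).length := dist_le _
  have h2 : G.dist z y ≤ (p.dropUntil z hz).length := dist_le _
  have h3 : (p.takeUntil z hz).length + (p.dropUntil z hz).length = p.length := by
    have := congrArg Walk.length (p.take_spec hz)
    rwa [Walk.length_append] at this
  have h4 := hG.dist_triangle (u := x) (v := z) (w := y)
  omega

private lemma isPath_concat' {x a b : V} {p : G.Walk x a} (hp : p.IsPath) (h : G.Adj a b)
    (hb : b ∉ p.support) : (p.concat h).IsPath := by
  rw [← Walk.isPath_reverse_iff, Walk.reverse_concat]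
  exact hp.reverse.cons (by simpa [Walk.support_reverse] using hb)

/-- In a tree, distances from the two endpoints of an edge differ by exactly one. -/
private lemma tree_adj_dist (ht : G.IsTree) {a b : V} (hab : G.Adj a b) (x : V) :
    G.dist a x = G.dist b x + 1 ∨ G.dist b x = G.dist a x + 1 := by
  have hconn := ht.isConnected
  have t1 : G.dist a x ≤ G.dist a b + G.dist b x := hconn.dist_triangle
  have t2 : G.dist b x ≤ G.dist b a + G.dist a x := hconn.dist_triangle
  have hab1 : G.dist a b = 1 := dist_eq_one_iff_adj.mpr hab
  have hba1 : G.dist b a = 1 := dist_eq_one_iff_adj.mpr hab.symm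
  have hne : G.dist a x ≠ G.dist b x := by
    intro heq
    obtain ⟨p, hp, hpl⟩ := hconn.exists_path_of_dist x a
    obtain ⟨q, hq, hql⟩ := hconn.exists_path_of_dist x b
    have hbp : b ∉ p.support := by
      intro hbs
      have := dist_split hconn hpl hbs
      have hcx : G.dist x b = G.dist b x := dist_comm ..
      have hax : G.dist x a = G.dist a x := dist_comm ..
      omega
    have hcat : (p.concat hab).IsPath := isPath_concat' hp hab hbp
    have := path_eq ht hq hcat
    have hlen := congrArg Walk.length this
    rw [Walk.length_concat, hql, hpl] at hlen
    have hcx : G.dist x b = G.dist b x := dist_comm ..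
    have hax : G.dist x a = G.dist a x := dist_comm ..
    omega
  omega

/-- In a tree with `a-b-d` a path (`a ≠ d`), a vertex strictly closer to `d` than
to `b` is strictly closer to `b` than to `a`. -/
private lemma side_mono (ht : G.IsTree) {a b d : V} (hab : G.Adj a b) (hbd : G.Adj b d)
    (had : a ≠ d) (x : V) (hx : G.dist d x < G.dist b x) : G.dist b x < G.dist a x := by
  have hconn := ht.isConnected
  by_contra hcon
  have h1 : G.dist b x = G.dist a x + 1 := by
    rcases tree_adj_dist ht hab x with h | h
    · omega
    · exact h
  have h2 : G.dist b x = G.dist d x + 1 := by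
    rcases tree_adj_dist ht hbd x with h | h
    · exact h
    · omega
  obtain ⟨p, hp, hpl⟩ := hconn.exists_path_of_dist x a
  obtain ⟨q, hq, hql⟩ := hconn.exists_path_of_dist x d
  have hax : G.dist x a = G.dist a x := dist_comm ..
  have hdx : G.dist x d = G.dist d x := dist_comm ..
  have hbp : b ∉ p.support := by
    intro hbs
    have := dist_split hconn hpl hbs
    have hba1 : G.dist b a = 1 := dist_eq_one_iff_adj.mpr hab.symm
    have : G.dist x b = G.dist b x := dist_comm ..
    omega
  have hbq : b ∉ q.support := by
    intro hbs
    have := dist_split hconn hql hbs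
    have hbd1 : G.dist b d = 1 := dist_eq_one_iff_adj.mpr hbd
    have : G.dist x b = G.dist b x := dist_comm ..
    omega
  have hcat1 : (p.concat hab).IsPath := isPath_concat' hp hab hbp
  have hcat2 : (q.concat hbd.symm).IsPath := isPath_concat' hq hbd.symm hbq
  have heq := path_eq ht hcat1 hcat2
  obtain ⟨hv, -⟩ := Walk.concat_inj heq
  exact had (hv ▸ rfl)

/-- In a tree, two vertices on the same side of an edge are joined by a geodesic
avoiding that edge. -/
private lemma sameside_walk (ht : G.IsTree) {a b x y : V} (hab : G.Adj a b)
    (hx : G.dist a x < G.dist b x) (hy : G.dist a y < G.dist b y) :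
    ∃ p : G.Walk x y, p.length = G.dist x y ∧ s(a, b) ∉ p.edges := by
  have hconn := ht.isConnected
  obtain ⟨p, hp, hlen⟩ := hconn.exists_path_of_dist x y
  refine ⟨p, hlen, fun he => ?_⟩
  have hA : a ∈ p.support := p.fst_mem_support_of_mem_edges he
  have hB : b ∈ p.support := p.snd_mem_support_of_mem_edges he
  have h1 := dist_split hconn hlen hA
  have h2 := dist_split hconn hlen hB
  have d1 : G.dist b x = G.dist a x + 1 := by
    rcases tree_adj_dist ht hab x with h | h
    · omega
    · exact h
  have d2 : G.dist b y = G.dist a y + 1 := by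
    rcases tree_adj_dist ht hab y with h | h
    · omega
    · exact h
  have e1 : G.dist x a = G.dist a x := dist_comm ..
  have e2 : G.dist x b = G.dist b x := dist_comm ..
  have e3 : G.dist a y = G.dist y a := dist_comm ..
  have e4 : G.dist b y = G.dist y b := dist_comm ..
  omega

/-- Updating `st w` by replacing `b` with `b'` keeps every edge except possibly `{w,b}`. -/
private lemma update_adj (st : V → Finset V) (w b b' : V) {u v : V}
    (h : (NCG.graph st).Adj u v) (hne : s(u, v) ≠ s(w, b)) :
    (NCG.graph (Function.update st w (insert b' ((st w).erase b)))).Adj u v := by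
  obtain ⟨huv, hmem⟩ := h
  refine ⟨huv, ?_⟩
  simp only [Function.update_apply]
  by_cases hu : u = w
  · subst hu
    have hvb : v ≠ b := by
      intro hvb; subst hvb; exact hne rfl
    rcases hmem with hv | hv
    · left; rw [if_pos rfl]
      exact Finset.mem_insert_of_mem (Finset.mem_erase.mpr ⟨hvb, hv⟩)
    · right; rw [if_neg (fun hvw : v = u => huv hvw.symm)]; exact hv
  · by_cases hv : v = w
    · subst hv
      have hub : u ≠ b := by
        intro hub; subst hub
        exact hne Sym2.eq_swap
      rcases hmem with h' | h'
      · left; rw [if_neg hu]; exact h'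
      · right; rw [if_pos rfl]
        exact Finset.mem_insert_of_mem (Finset.mem_erase.mpr ⟨hub, h'⟩)
    · rw [if_neg hu, if_neg hv]; exact hmem

private lemma update_adj_new (st : V → Finset V) (w b : V) {b' : V} (h : b' ≠ w) :
    (NCG.graph (Function.update st w (insert b' ((st w).erase b)))).Adj w b' := by
  refine ⟨h.symm, Or.inl ?_⟩
  rw [Function.update_self]
  exact Finset.mem_insert_self _ _

/-- A walk avoiding the edge `{w,b}` can be transferred to the updated graph. -/
private lemma transfer_walk (st : V → Finset V) (w b b' : V) {u v : V}
    (p : (NCG.graph st).Walk u v) (hp : s(w, b) ∉ p.edges) :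
    ∃ q : (NCG.graph (Function.update st w (insert b' ((st w).erase b)))).Walk u v,
      q.length = p.length := by
  refine ⟨p.transfer _ (fun e he => ?_), Walk.length_transfer _ _⟩
  have heG : e ∈ (NCG.graph st).edgeSet := p.edges_subset_edgeSet he
  have hene : e ≠ s(w, b) := fun h => hp (h ▸ he)
  revert heG hene
  refine Sym2.ind (fun x y hxy hne => ?_) e
  exact update_adj st w b b' hxy hne

/-- The key consequence of stability for "swap one bought edge" deviations. -/
private lemma swap_sum_le {α : ℝ} (hα : 0 < α) {st : V → Finset V}
    (hself : ∀ u, u ∉ st u) (hstable : NCG.Stable α st)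
    (hconn : (NCG.graph st).Connected)
    {w b b' : V} (hb : b ∈ st w) (hb' : b' ≠ w)
    (f : V → ℕ)
    (hf : ∀ x : V, ∃ q : (NCG.graph (Function.update st w
        (insert b' ((st w).erase b)))).Walk w x, q.length ≤ f x) :
    ∑ x : V, (NCG.graph st).dist w x ≤ ∑ x : V, f x := by
  set t : Finset V := insert b' ((st w).erase b) with htdef
  have hwt : w ∉ t := by
    simp only [htdef, Finset.mem_insert, Finset.mem_erase]
    push_neg
    exact ⟨fun h => hb' h.symm, fun _ => hself w⟩
  have hconn' : (NCG.graph (Function.update st w t)).Connected := by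
    rw [connected_iff_exists_forall_reachable]
    exact ⟨w, fun x => ⟨(hf x).choose⟩⟩
  have hle := hstable w t hwt
  rw [NCG.cost, NCG.cost, NCG.distcost, NCG.distcost, if_pos hconn, if_pos hconn',
    ← EReal.coe_add, ← EReal.coe_add, EReal.coe_le_coe_iff] at hle
  have hcards : t.card ≤ (st w).card := by
    have h1 : t.card ≤ ((st w).erase b).card + 1 := Finset.card_insert_le _ _
    have h2 : ((st w).erase b).card = (st w).card - 1 := Finset.card_erase_of_mem hb
    have h3 : 1 ≤ (st w).card := Finset.card_pos.mpr ⟨b, hb⟩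
    omega
  have hcardst : Function.update st w t w = t := Function.update_self _ _ _
  rw [hcardst] at hle
  have hsum' : ∑ x : V, ((NCG.graph (Function.update st w t)).dist w x : ℝ) ≤
      ∑ x : V, (f x : ℝ) := by
    apply Finset.sum_le_sum
    intro x _
    obtain ⟨q, hq⟩ := hf x
    have := (dist_le q).trans hq
    exact_mod_cast this
  have halpha : α * (t.card : ℝ) ≤ α * ((st w).card : ℝ) := by
    apply mul_le_mul_of_nonneg_left _ hα.le
    exact_mod_cast hcards
  have hreal : ∑ x : V, ((NCG.graph st).dist w x : ℝ) ≤ ∑ x : V, (f x : ℝ) := by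
    linarith
  exact_mod_cast hreal


/-- Stability implies: if `a` buys the edge to `b`, then `b` is a 1-median of its side
of the edge `{a,b}` (comparing with any `b'` on that side). -/
private lemma median_bound {α : ℝ} (hα : 0 < α) {st : V → Finset V}
    (hself : ∀ u, u ∉ st u) (hstable : NCG.Stable α st)
    (htree : (NCG.graph st).IsTree)
    {a b b' : V} (hab : (NCG.graph st).Adj a b) (hb : b ∈ st a) (hb'a : b' ≠ a)
    (hside : (NCG.graph st).dist b b' < (NCG.graph st).dist a b') :
    ∑ x ∈ Finset.univ.filter
        (fun x => (NCG.graph st).dist b x < (NCG.graph st).dist a x),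
        (NCG.graph st).dist b x
      ≤ ∑ x ∈ Finset.univ.filter
        (fun x => (NCG.graph st).dist b x < (NCG.graph st).dist a x),
        (NCG.graph st).dist b' x := by
  have hconn := htree.isConnected
  set G := NCG.graph st with hGdef
  set f : V → ℕ :=
    fun x => if G.dist b x < G.dist a x then G.dist b' x + 1 else G.dist a x with hfdef
  have hwalks : ∀ x : V, ∃ q : (NCG.graph (Function.update st a
      (insert b' ((st a).erase b)))).Walk a x, q.length ≤ f x := by
    intro x
    by_cases hxB : G.dist b x < G.dist a x
    · obtain ⟨p, hpl, hpe⟩ := sameside_walk htree hab.symm hside hxB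
      have hpe' : s(a, b) ∉ p.edges := by rwa [Sym2.eq_swap]
      obtain ⟨q, hql⟩ := transfer_walk st a b b' p hpe'
      refine ⟨Walk.cons (update_adj_new st a b hb'a) q, ?_⟩
      rw [Walk.length_cons, hql, hpl, hfdef]
      simp [hxB]
    · have haa : G.dist a a < G.dist b a := by
        rw [dist_self, dist_eq_one_iff_adj.mpr hab.symm]
        omega
      have hax : G.dist a x < G.dist b x := by
        rcases tree_adj_dist htree hab x with h | h <;> omega
      obtain ⟨p, hpl, hpe⟩ := sameside_walk htree hab haa hax
      obtain ⟨q, hql⟩ := transfer_walk st a b b' p hpe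
      refine ⟨q, ?_⟩
      rw [hql, hpl, hfdef]
      simp [hxB]
  have hswap := swap_sum_le hα hself hstable hconn hb hb'a f hwalks
  have hsplit1 : ∑ x : V, G.dist a x =
      ∑ x ∈ Finset.univ.filter (fun x => G.dist b x < G.dist a x), G.dist a x +
      ∑ x ∈ Finset.univ.filter (fun x => ¬ (G.dist b x < G.dist a x)), G.dist a x :=
    (Finset.sum_filter_add_sum_filter_not _ _ _).symm
  have hsplit2 : ∑ x : V, f x =
      ∑ x ∈ Finset.univ.filter (fun x => G.dist b x < G.dist a x), (G.dist b' x + 1) +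
      ∑ x ∈ Finset.univ.filter (fun x => ¬ (G.dist b x < G.dist a x)), G.dist a x := by
    rw [← Finset.sum_filter_add_sum_filter_not Finset.univ
      (fun x => G.dist b x < G.dist a x) f]
    congr 1
    · refine Finset.sum_congr rfl (fun x hx => ?_)
      rw [hfdef]
      simp only [Finset.mem_filter] at hx
      exact if_pos hx.2
    · refine Finset.sum_congr rfl (fun x hx => ?_)
      rw [hfdef]
      simp only [Finset.mem_filter] at hx
      exact if_neg hx.2
  have hadd : ∀ g : V → ℕ, ∑ x ∈ Finset.univ.filter (fun x => G.dist b x < G.dist a x), (g x + 1) =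
      ∑ x ∈ Finset.univ.filter (fun x => G.dist b x < G.dist a x), g x + (Finset.univ.filter (fun x => G.dist b x < G.dist a x)).card := by
    intro g
    rw [Finset.sum_add_distrib, Finset.sum_const, smul_eq_mul, mul_one]
  have hBsum : ∑ x ∈ Finset.univ.filter (fun x => G.dist b x < G.dist a x), G.dist a x =
      ∑ x ∈ Finset.univ.filter (fun x => G.dist b x < G.dist a x), G.dist b x + (Finset.univ.filter (fun x => G.dist b x < G.dist a x)).card := by
    rw [← hadd]
    refine Finset.sum_congr rfl (fun x hx => ?_)
    simp only [Finset.mem_filter] at hx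
    rcases tree_adj_dist htree hab x with h | h
    · exact h
    · exfalso; omega
  rw [hsplit1, hsplit2, hadd, hBsum] at hswap
  omega


/-- With `α ≤ 0`, a stable connected network has no two vertices at distance 2. -/
private lemma alpha_nonpos_absurd {α : ℝ} (hα : α ≤ 0) {st : V → Finset V}
    (hself : ∀ u, u ∉ st u) (hstable : NCG.Stable α st)
    (hconn : (NCG.graph st).Connected)
    {a b : V} (h2 : (NCG.graph st).dist a b = 2) : False := by
  set G := NCG.graph st with hGdef
  set t : Finset V := Finset.univ.erase a with htdef
  have hat : a ∉ t := Finset.notMem_erase _ _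
  set st' := Function.update st a t with hst'def
  have hadj' : ∀ x : V, x ≠ a → (NCG.graph st').Adj a x := by
    intro x hx
    refine ⟨fun h => hx h.symm, Or.inl ?_⟩
    rw [hst'def, Function.update_self]
    exact Finset.mem_erase.mpr ⟨hx, Finset.mem_univ x⟩
  have hconn' : (NCG.graph st').Connected := by
    rw [connected_iff_exists_forall_reachable]
    refine ⟨a, fun x => ?_⟩
    by_cases hx : x = a
    · subst hx; exact ⟨Walk.nil⟩
    · exact ⟨(hadj' x hx).toWalk⟩
  have hle := hstable a t hat
  rw [NCG.cost, NCG.cost, NCG.distcost, NCG.distcost] at hle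
  rw [← hGdef, ← hst'def, if_pos hconn, if_pos hconn',
    ← EReal.coe_add, ← EReal.coe_add, EReal.coe_le_coe_iff] at hle
  have hab : a ≠ b := by
    intro h
    rw [h, SimpleGraph.dist_self] at h2
    omega
  -- upper bound on the new distance cost
  have hup : ∑ x : V, ((NCG.graph st').dist a x : ℝ) ≤ (Finset.univ.erase a).card := by
    have h1 : ∑ x : V, (NCG.graph st').dist a x =
        (NCG.graph st').dist a a + ∑ x ∈ Finset.univ.erase a, (NCG.graph st').dist a x :=
      (Finset.add_sum_erase _ _ (Finset.mem_univ a)).symm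
    have h2' : ∑ x ∈ Finset.univ.erase a, (NCG.graph st').dist a x ≤
        (Finset.univ.erase a).card := by
      rw [Finset.card_eq_sum_ones]
      refine Finset.sum_le_sum (fun x hx => ?_)
      have hxa : x ≠ a := (Finset.mem_erase.mp hx).1
      exact (dist_eq_one_iff_adj.mpr (hadj' x hxa)).le
    rw [SimpleGraph.dist_self] at h1
    have : ∑ x : V, (NCG.graph st').dist a x ≤ (Finset.univ.erase a).card := by omega
    exact_mod_cast this
  -- lower bound on the old distance cost
  have hlow : (Fintype.card V : ℝ) ≤ ∑ x : V, (G.dist a x : ℝ) := by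
    have h1 : ∑ x : V, G.dist a x =
        G.dist a b + ∑ x ∈ Finset.univ.erase b, G.dist a x :=
      (Finset.add_sum_erase _ _ (Finset.mem_univ b)).symm
    have h2' : ∑ x ∈ (Finset.univ.erase b).erase a, G.dist a x ≤
        ∑ x ∈ Finset.univ.erase b, G.dist a x :=
      Finset.sum_le_sum_of_subset (Finset.erase_subset _ _)
    have h3 : ((Finset.univ.erase b).erase a).card ≤
        ∑ x ∈ (Finset.univ.erase b).erase a, G.dist a x := by
      rw [Finset.card_eq_sum_ones]
      refine Finset.sum_le_sum (fun x hx => ?_)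
      have hxa : x ≠ a := (Finset.mem_erase.mp hx).1
      exact hconn.pos_dist_of_ne (fun h => hxa h.symm)
    have h4 : ((Finset.univ.erase b).erase a).card = Fintype.card V - 2 := by
      rw [Finset.card_erase_of_mem (Finset.mem_erase.mpr ⟨hab, Finset.mem_univ a⟩),
        Finset.card_erase_of_mem (Finset.mem_univ b), Finset.card_univ]
      omega
    have h5 : 2 ≤ Fintype.card V := by
      have := Finset.card_le_card (Finset.subset_univ {a, b})
      rw [Finset.card_univ] at this
      rw [Finset.card_insert_of_notMem (by simpa using hab), Finset.card_singleton] at this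
      omega
    have : Fintype.card V ≤ ∑ x : V, G.dist a x := by omega
    exact_mod_cast this
  -- cardinalities
  have hsub : st a ⊆ t := by
    intro x hx
    refine Finset.mem_erase.mpr ⟨fun h => hself a (h ▸ hx), Finset.mem_univ x⟩
  have hcards : (st a).card ≤ t.card := Finset.card_le_card hsub
  have hcardt : (t.card : ℝ) = (Fintype.card V : ℝ) - 1 := by
    rw [htdef, Finset.card_erase_of_mem (Finset.mem_univ a), Finset.card_univ]
    have h5 : 1 ≤ Fintype.card V := by
      have : Finset.univ.Nonempty := ⟨a, Finset.mem_univ a⟩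
      have := Finset.card_pos.mpr this
      rw [Finset.card_univ] at this
      omega
    rw [Nat.cast_sub h5, Nat.cast_one]
  have hst'a : st' a = t := Function.update_self _ _ _
  rw [hst'a] at hle
  have hαmul : α * (t.card : ℝ) ≤ α * ((st a).card : ℝ) := by
    apply mul_le_mul_of_nonpos_left _ hα
    exact_mod_cast hcards
  rw [← htdef] at hup
  linarith


/-- The "side set" below the edge `{q m, q (m+1)}`: vertices strictly closer to `q (m+1)`. -/
private noncomputable def Aset (st : V → Finset V) (q : ℕ → V) (m : ℕ) : Finset V :=
  Finset.univ.filter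
    (fun x => (NCG.graph st).dist (q (m+1)) x < (NCG.graph st).dist (q m) x)

private lemma mem_Aset {st : V → Finset V} {q : ℕ → V} {m : ℕ} {x : V} :
    x ∈ Aset st q m ↔
      (NCG.graph st).dist (q (m+1)) x < (NCG.graph st).dist (q m) x := by
  simp [Aset]

section PathLemmas

variable {st : V → Finset V} {q : ℕ → V} {k : ℕ}

private lemma qne (hdistq : ∀ m, m ≤ k + 1 → (NCG.graph st).dist (q 0) (q m) = m)
    {m l : ℕ} (hm : m ≤ k + 1) (hl : l ≤ k + 1) (hne : m ≠ l) : q m ≠ q l := by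
  intro h
  have h1 := hdistq m hm
  have h2 := hdistq l hl
  rw [h] at h1
  omega

private lemma qdist2 (hconn : (NCG.graph st).Connected)
    (hdistq : ∀ m, m ≤ k + 1 → (NCG.graph st).dist (q 0) (q m) = m)
    {m : ℕ} (hm : m + 2 ≤ k + 1) :
    2 ≤ (NCG.graph st).dist (q m) (q (m+2)) := by
  have h1 := hdistq m (by omega)
  have h2 := hdistq (m+2) hm
  have h3 := hconn.dist_triangle (u := q 0) (v := q m) (w := q (m+2))
  omega

private lemma Aset_antitone (htree : (NCG.graph st).IsTree)
    (hadjq : ∀ m, m ≤ k → (NCG.graph st).Adj (q m) (q (m+1)))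
    (hdistq : ∀ m, m ≤ k + 1 → (NCG.graph st).dist (q 0) (q m) = m) :
    ∀ m l, m ≤ l → l ≤ k → Aset st q l ⊆ Aset st q m := by
  have hstep : ∀ n, n + 1 ≤ k → Aset st q (n+1) ⊆ Aset st q n := by
    intro n hn x hx
    rw [mem_Aset] at hx ⊢
    exact side_mono htree (hadjq n (by omega)) (hadjq (n+1) hn)
      (qne hdistq (by omega) (by omega) (by omega)) x hx
  intro m l hml
  induction l, hml using Nat.le_induction with
  | base => exact fun _ => subset_rfl
  | succ l hml ih =>
    intro hlk
    exact (hstep l hlk).trans (ih (by omega))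

private lemma dich (htree : (NCG.graph st).IsTree)
    (hadjq : ∀ m, m ≤ k → (NCG.graph st).Adj (q m) (q (m+1)))
    {m : ℕ} (hm : m ≤ k) (x : V) :
    (NCG.graph st).dist (q m) x = (NCG.graph st).dist (q (m+1)) x + 1 ∨
      (NCG.graph st).dist (q (m+1)) x = (NCG.graph st).dist (q m) x + 1 :=
  tree_adj_dist htree (hadjq m hm) x

private lemma dist_down (htree : (NCG.graph st).IsTree)
    (hadjq : ∀ m, m ≤ k → (NCG.graph st).Adj (q m) (q (m+1)))
    (hdistq : ∀ m, m ≤ k + 1 → (NCG.graph st).dist (q 0) (q m) = m)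
    {m : ℕ} (hm : m ≤ k) {x : V} (hx : x ∉ Aset st q m) :
    ∀ t, m + t ≤ k + 1 → (NCG.graph st).dist (q (m+t)) x = (NCG.graph st).dist (q m) x + t := by
  intro t
  induction t with
  | zero => intro _; simp
  | succ t ih =>
    intro hkt
    have ht := ih (by omega)
    have hnot : x ∉ Aset st q (m+t) := by
      intro hmem
      exact hx (Aset_antitone htree hadjq hdistq m (m+t) (by omega) (by omega) hmem)
    rw [mem_Aset] at hnot
    rcases dich htree hadjq (m := m+t) (by omega) x with h | h
    · omega
    · have e : m + (t+1) = (m+t) + 1 := by omega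
      rw [e]
      omega

private lemma dist_up (htree : (NCG.graph st).IsTree)
    (hadjq : ∀ m, m ≤ k → (NCG.graph st).Adj (q m) (q (m+1)))
    (hdistq : ∀ m, m ≤ k + 1 → (NCG.graph st).dist (q 0) (q m) = m)
    {p : ℕ} (hp : p ≤ k) {x : V} (hx : x ∈ Aset st q p) :
    ∀ t, t ≤ p + 1 →
      (NCG.graph st).dist (q (p+1-t)) x = (NCG.graph st).dist (q (p+1)) x + t := by
  intro t
  induction t with
  | zero => intro _; simp
  | succ t ih =>
    intro htp
    have ht := ih (by omega)
    have hmem : x ∈ Aset st q (p - t) :=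
      Aset_antitone htree hadjq hdistq (p - t) p (by omega) hp hx
    rw [mem_Aset] at hmem
    rcases dich htree hadjq (m := p - t) (by omega) x with h | h
    · have e1 : p + 1 - (t+1) = p - t := by omega
      have e2 : p + 1 - t = p - t + 1 := by omega
      rw [e1]
      rw [e2] at ht
      omega
    · omega

end PathLemmas


section StableLemmas

variable {α : ℝ} {st : V → Finset V} {q : ℕ → V} {k : ℕ}

private lemma sum_succ_eq {s : Finset V} {g h : V → ℕ} (he : ∀ x ∈ s, g x = h x + 1) :
    ∑ x ∈ s, g x = ∑ x ∈ s, h x + s.card := by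
  rw [Finset.sum_congr rfl he, Finset.sum_add_distrib, Finset.sum_const, smul_eq_mul, mul_one]

/-- In a stable tree, no path edge (beyond the root edge) is bought "upward". -/
private lemma no_up_own (hα : 0 < α) (hself : ∀ u, u ∉ st u) (hstable : NCG.Stable α st)
    (htree : (NCG.graph st).IsTree)
    (hadjq : ∀ m, m ≤ k → (NCG.graph st).Adj (q m) (q (m+1)))
    (hdistq : ∀ m, m ≤ k + 1 → (NCG.graph st).dist (q 0) (q m) = m)
    (hcent : 2 * (Aset st q 0).card ≤ Fintype.card V) :
    ∀ m, 1 ≤ m → m ≤ k → q m ∉ st (q (m+1)) := by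
  intro m hm1 hmk hmem
  obtain ⟨n, rfl⟩ : ∃ n, m = n + 1 := ⟨m - 1, by omega⟩
  have hconn := htree.isConnected
  -- median bound with a = q (n+2), b = q (n+1), b' = q n
  have hab : (NCG.graph st).Adj (q (n+2)) (q (n+1)) := by
    have := (hadjq (n+1) hmk).symm
    rwa [show n + 1 + 1 = n + 2 from by omega] at this
  have hb'a : q n ≠ q (n+2) := qne hdistq (by omega) (by omega) (by omega)
  have hside : (NCG.graph st).dist (q (n+1)) (q n) < (NCG.graph st).dist (q (n+2)) (q n) := by
    have h1 : (NCG.graph st).dist (q (n+1)) (q n) = 1 := by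
      rw [dist_comm]
      exact dist_eq_one_iff_adj.mpr (hadjq n (by omega))
    have h2 : 2 ≤ (NCG.graph st).dist (q (n+2)) (q n) := by
      rw [dist_comm]
      exact qdist2 hconn hdistq (by omega)
    omega
  have hmed := median_bound hα hself hstable htree hab hmem hb'a hside
  set U1 : Finset V := Finset.univ \ Aset st q n with hU1def
  set U2 : Finset V := Aset st q n \ Aset st q (n+1) with hU2def
  have hsub : Aset st q (n+1) ⊆ Aset st q n :=
    Aset_antitone htree hadjq hdistq n (n+1) (by omega) hmk
  have hBeq : Finset.univ.filter
      (fun x => (NCG.graph st).dist (q (n+1)) x < (NCG.graph st).dist (q (n+2)) x) = U1 ∪ U2 := by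
    ext x
    simp only [Finset.mem_filter, Finset.mem_univ, true_and, hU1def, hU2def,
      Finset.mem_union, Finset.mem_sdiff, mem_Aset]
    rw [show n + 1 + 1 = n + 2 from by omega]
    have hd1 := dich htree hadjq (m := n) (by omega) x
    have hd2 := dich htree hadjq (m := n+1) hmk x
    rw [show n + 1 + 1 = n + 2 from by omega] at hd2
    have himp : (NCG.graph st).dist (q (n+2)) x < (NCG.graph st).dist (q (n+1)) x →
        (NCG.graph st).dist (q (n+1)) x < (NCG.graph st).dist (q n) x := by
      intro h
      have := hsub (mem_Aset.mpr (by rw [show n+1+1 = n+2 from by omega]; exact h))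
      exact mem_Aset.mp this
    constructor
    · intro h3
      rcases hd1 with h1 | h1
      · exact Or.inr ⟨by omega, by omega⟩
      · exact Or.inl (by omega)
    · intro h3
      have hnb : ¬ (NCG.graph st).dist (q (n+2)) x < (NCG.graph st).dist (q (n+1)) x := by
        rcases h3 with h3 | h3
        · intro hb; exact h3 (himp hb)
        · exact h3.2
      rcases hd2 with h2 | h2
      · omega
      · omega
  rw [hBeq] at hmed
  have hdisj : Disjoint U1 U2 := by
    rw [Finset.disjoint_left]
    intro x hx1 hx2
    rw [hU1def, Finset.mem_sdiff] at hx1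
    rw [hU2def, Finset.mem_sdiff] at hx2
    exact hx1.2 hx2.1
  rw [Finset.sum_union hdisj, Finset.sum_union hdisj] at hmed
  have e1 : ∑ x ∈ U1, (NCG.graph st).dist (q (n+1)) x = ∑ x ∈ U1, (NCG.graph st).dist (q n) x + U1.card := by
    apply sum_succ_eq
    intro x hx
    rw [hU1def, Finset.mem_sdiff] at hx
    have hxn := hx.2
    rw [mem_Aset] at hxn
    rcases dich htree hadjq (m := n) (by omega) x with h | h
    · omega
    · exact h
  have e2 : ∑ x ∈ U2, (NCG.graph st).dist (q n) x = ∑ x ∈ U2, (NCG.graph st).dist (q (n+1)) x + U2.card := by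
    apply sum_succ_eq
    intro x hx
    rw [hU2def, Finset.mem_sdiff] at hx
    have hxn := hx.1
    rw [mem_Aset] at hxn
    rcases dich htree hadjq (m := n) (by omega) x with h | h
    · exact h
    · omega
  have hc1 : U1.card = Fintype.card V - (Aset st q n).card := by
    rw [hU1def, Finset.card_sdiff_of_subset (Finset.subset_univ _), Finset.card_univ]
  have hc2 : U2.card = (Aset st q n).card - (Aset st q (n+1)).card := by
    rw [hU2def, Finset.card_sdiff_of_subset hsub]
  have hmono : (Aset st q n).card ≤ (Aset st q 0).card :=
    Finset.card_le_card (Aset_antitone htree hadjq hdistq 0 n (by omega) (by omega))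
  have hq2mem : q (n+2) ∈ Aset st q (n+1) := by
    rw [mem_Aset, show n + 1 + 1 = n + 2 from by omega, SimpleGraph.dist_self]
    have : (NCG.graph st).dist (q (n+1)) (q (n+2)) = 1 := by
      have := hadjq (n+1) hmk
      rw [show n + 1 + 1 = n + 2 from by omega] at this
      exact dist_eq_one_iff_adj.mpr this
    omega
  have hpos : 1 ≤ (Aset st q (n+1)).card := Finset.card_pos.mpr ⟨_, hq2mem⟩
  have hNle : (Aset st q n).card ≤ Fintype.card V := by
    rw [← Finset.card_univ]
    exact Finset.card_le_card (Finset.subset_univ _)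
  have hcle : (Aset st q (n+1)).card ≤ (Aset st q n).card := Finset.card_le_card hsub
  have key : U1.card ≤ U2.card := by omega
  omega

/-- In a stable tree, every path edge (beyond the root edge) is bought "downward". -/
private lemma down_own (hα : 0 < α) (hself : ∀ u, u ∉ st u) (hstable : NCG.Stable α st)
    (htree : (NCG.graph st).IsTree)
    (hadjq : ∀ m, m ≤ k → (NCG.graph st).Adj (q m) (q (m+1)))
    (hdistq : ∀ m, m ≤ k + 1 → (NCG.graph st).dist (q 0) (q m) = m)
    (hcent : 2 * (Aset st q 0).card ≤ Fintype.card V) :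
    ∀ m, 1 ≤ m → m ≤ k → q (m+1) ∈ st (q m) := by
  intro m hm1 hmk
  rcases (hadjq m hmk).2 with h | h
  · exact h
  · exact absurd h (no_up_own hα hself hstable htree hadjq hdistq hcent m hm1 hmk)

/-- Halving of side sets along the path in a stable tree. -/
private lemma halving (hα : 0 < α) (hself : ∀ u, u ∉ st u) (hstable : NCG.Stable α st)
    (htree : (NCG.graph st).IsTree)
    (hadjq : ∀ m, m ≤ k → (NCG.graph st).Adj (q m) (q (m+1)))
    (hdistq : ∀ m, m ≤ k + 1 → (NCG.graph st).dist (q 0) (q m) = m)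
    (hcent : 2 * (Aset st q 0).card ≤ Fintype.card V) :
    ∀ n, 1 ≤ n → n + 1 ≤ k → 2 * (Aset st q (n+1)).card ≤ (Aset st q n).card := by
  intro n hn1 hnk
  have hconn := htree.isConnected
  -- median bound with a = q n, b = q (n+1), b' = q (n+2)
  have hab : (NCG.graph st).Adj (q n) (q (n+1)) := hadjq n (by omega)
  have hb : q (n+1) ∈ st (q n) := down_own hα hself hstable htree hadjq hdistq hcent n hn1 (by omega)
  have hb'a : q (n+2) ≠ q n := qne hdistq (by omega) (by omega) (by omega)
  have hside : (NCG.graph st).dist (q (n+1)) (q (n+2)) < (NCG.graph st).dist (q n) (q (n+2)) := by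
    have h1 : (NCG.graph st).dist (q (n+1)) (q (n+2)) = 1 := by
      have := hadjq (n+1) hnk
      rw [show n + 1 + 1 = n + 2 from by omega] at this
      exact dist_eq_one_iff_adj.mpr this
    have h2 : 2 ≤ (NCG.graph st).dist (q n) (q (n+2)) := qdist2 hconn hdistq (by omega)
    omega
  have hmed := median_bound hα hself hstable htree hab hb hb'a hside
  have hBeq : Finset.univ.filter
      (fun x => (NCG.graph st).dist (q (n+1)) x < (NCG.graph st).dist (q n) x) = Aset st q n := by
    ext x
    simp [mem_Aset]
  rw [hBeq] at hmed
  have hsub : Aset st q (n+1) ⊆ Aset st q n :=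
    Aset_antitone htree hadjq hdistq n (n+1) (by omega) hnk
  rw [← Finset.sum_sdiff hsub (f := fun x => (NCG.graph st).dist (q (n+1)) x),
    ← Finset.sum_sdiff hsub (f := fun x => (NCG.graph st).dist (q (n+2)) x)] at hmed
  have e1 : ∑ x ∈ Aset st q (n+1), (NCG.graph st).dist (q (n+1)) x =
      ∑ x ∈ Aset st q (n+1), (NCG.graph st).dist (q (n+2)) x + (Aset st q (n+1)).card := by
    apply sum_succ_eq
    intro x hx
    rw [mem_Aset, show n + 1 + 1 = n + 2 from by omega] at hx
    rcases dich htree hadjq (m := n+1) hnk x with h | h <;>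
      rw [show n + 1 + 1 = n + 2 from by omega] at h
    · exact h
    · omega
  have e2 : ∑ x ∈ Aset st q n \ Aset st q (n+1), (NCG.graph st).dist (q (n+2)) x =
      ∑ x ∈ Aset st q n \ Aset st q (n+1), (NCG.graph st).dist (q (n+1)) x + (Aset st q n \ Aset st q (n+1)).card := by
    apply sum_succ_eq
    intro x hx
    rw [Finset.mem_sdiff] at hx
    have hxn := hx.2
    rw [mem_Aset, show n + 1 + 1 = n + 2 from by omega] at hxn
    rcases dich htree hadjq (m := n+1) hnk x with h | h <;>
      rw [show n + 1 + 1 = n + 2 from by omega] at h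
    · omega
    · exact h
  have hc2 : (Aset st q n \ Aset st q (n+1)).card =
      (Aset st q n).card - (Aset st q (n+1)).card := Finset.card_sdiff_of_subset hsub
  have hcle : (Aset st q (n+1)).card ≤ (Aset st q n).card := Finset.card_le_card hsub
  omega

/-- Exponential decay of side-set sizes along the path in a stable tree. -/
private lemma Hbound (hα : 0 < α) (hself : ∀ u, u ∉ st u) (hstable : NCG.Stable α st)
    (htree : (NCG.graph st).IsTree)
    (hadjq : ∀ m, m ≤ k → (NCG.graph st).Adj (q m) (q (m+1)))
    (hdistq : ∀ m, m ≤ k + 1 → (NCG.graph st).dist (q 0) (q m) = m)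
    (hcent : 2 * (Aset st q 0).card ≤ Fintype.card V) :
    ∀ n, 1 ≤ n → n ≤ k → 2 ^ n * (Aset st q n).card ≤ Fintype.card V := by
  intro n hn1
  induction n, hn1 using Nat.le_induction with
  | base =>
    intro h1k
    have hmono : (Aset st q 1).card ≤ (Aset st q 0).card :=
      Finset.card_le_card (Aset_antitone htree hadjq hdistq 0 1 (by omega) h1k)
    have : 2 ^ 1 = 2 := by norm_num
    omega
  | succ n hn1 ih =>
    intro hnk
    have h1 := halving hα hself hstable htree hadjq hdistq hcent n hn1 hnk
    have h2 := ih (by omega)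
    calc 2 ^ (n+1) * (Aset st q (n+1)).card
        = 2 ^ n * (2 * (Aset st q (n+1)).card) := by ring
      _ ≤ 2 ^ n * (Aset st q n).card := Nat.mul_le_mul_left _ h1
      _ ≤ Fintype.card V := h2

end StableLemmas


open scoped Classical in
/-- The Voronoi cell of `cs j` among `cs 1, …, cs k`, as a `Finset`. -/
private noncomputable def vorF (st : V → Finset V) (cs : ℕ → V) (k j : ℕ) : Finset V :=
  Finset.univ.filter (fun x => ∀ l, 1 ≤ l → l ≤ k → l ≠ j →
    (NCG.graph st).dist (cs j) x < (NCG.graph st).dist (cs l) x)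

private lemma mem_vorF {st : V → Finset V} {cs : ℕ → V} {k j : ℕ} {x : V} :
    x ∈ vorF st cs k j ↔ ∀ l, 1 ≤ l → l ≤ k → l ≠ j →
      (NCG.graph st).dist (cs j) x < (NCG.graph st).dist (cs l) x := by
  classical
  simp [vorF]

private lemma ncard_vorF (st : V → Finset V) (cs : ℕ → V) (k j : ℕ) :
    ({x : V | ∀ l, 1 ≤ l → l ≤ k → l ≠ j →
      (NCG.graph st).dist (cs j) x < (NCG.graph st).dist (cs l) x}).ncard
      = (vorF st cs k j).card := by
  rw [show {x : V | ∀ l, 1 ≤ l → l ≤ k → l ≠ j →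
      (NCG.graph st).dist (cs j) x < (NCG.graph st).dist (cs l) x}
      = ↑(vorF st cs k j) by ext x; simp [mem_vorF]]
  exact Set.ncard_coe_finset _

private lemma geom_sum_Icc_half (n : ℕ) :
    ∑ j ∈ Finset.Icc 1 n, ((1 : ℝ) / 2 ^ j) = 1 - 1 / 2 ^ n := by
  induction n with
  | zero => simp
  | succ n ih =>
    rw [Finset.sum_Icc_succ_top (by omega : 1 ≤ n + 1), ih]
    have h2 : (2:ℝ) ^ n ≠ 0 := by positivity
    field_simp
    ring

end SubtreeSizeBoundAux

/-- In a stable tree network rooted at a centroid `c`, along any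
root-to-leaf path `c₀ = u, c₁, …, c_k = v` starting at a child `u` of `c` (each `c_(i+1)`
being the child of `c_i`), the sets
`n_i = |{x : d(c_i,x) < d(c_j,x) ∀ j ≠ i, 1 ≤ j ≤ k}` satisfy
`Σ_(j=1)^i n_j ≥ n · Σ_(j=1)^i 1/2^j` for every `1 ≤ i ≤ k`. -/
theorem subtree_size_bound {V : Type*} [Fintype V] [DecidableEq V]
    (α : ℝ) (st : V → Finset V) (hself : ∀ u, u ∉ st u)
    (hstable : NCG.Stable α st)
    (htree : (NCG.graph st).IsTree)
    (c : V) (hc : NCG.IsCentroidOn (NCG.graph st) Set.univ c)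
    (k : ℕ) (cs : ℕ → V)
    (hchild : (NCG.graph st).Adj c (cs 0))
    (hpath : ∀ i < k, (NCG.graph st).Adj (cs i) (cs (i + 1)) ∧
      (NCG.graph st).dist c (cs (i + 1)) = (NCG.graph st).dist c (cs i) + 1)
    (hleaf : ∃! w : V, (NCG.graph st).Adj (cs k) w) :
    ∀ i, 1 ≤ i → i ≤ k →
      (Fintype.card V : ℝ) * ∑ j ∈ Finset.Icc 1 i, ((1 : ℝ) / 2 ^ j) ≤
        ∑ j ∈ Finset.Icc 1 i,
          (({x : V | ∀ l, 1 ≤ l → l ≤ k → l ≠ j →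
              (NCG.graph st).dist (cs j) x < (NCG.graph st).dist (cs l) x}).ncard : ℝ) := by
  intro i hi1 hik
  classical
  have hconn := htree.isConnected
  have hk1 : 1 ≤ k := le_trans hi1 hik
  -- the augmented path starting at the centroid
  set q : ℕ → V := fun m => match m with
    | 0 => c
    | n + 1 => cs n
    with hqdef
  have hcs_dist : ∀ m, m ≤ k → (NCG.graph st).dist c (cs m) = m + 1 := by
    intro m
    induction m with
    | zero =>
      intro _
      exact SimpleGraph.dist_eq_one_iff_adj.mpr hchild
    | succ n ih =>
      intro h
      rw [(hpath n (by omega)).2, ih (by omega)]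
  have hadjq : ∀ m, m ≤ k → (NCG.graph st).Adj (q m) (q (m+1)) := by
    intro m hm
    cases m with
    | zero => exact hchild
    | succ n => exact (hpath n (by omega)).1
  have hdistq : ∀ m, m ≤ k + 1 → (NCG.graph st).dist (q 0) (q m) = m := by
    intro m hm
    cases m with
    | zero => exact SimpleGraph.dist_self
    | succ n => exact hcs_dist n (by omega)
  -- positivity of α
  have hα : 0 < α := by
    by_contra hcon
    push_neg at hcon
    have h2 : (NCG.graph st).dist c (cs 1) = 2 := by
      have := hcs_dist 1 hk1
      omega
    exact alpha_nonpos_absurd hcon hself hstable hconn h2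
  -- centroid bound on the top side set
  have hcent : 2 * (Aset st q 0).card ≤ Fintype.card V := by
    have hne : cs 0 ≠ c := hchild.ne'
    have hcb := hc.2 (cs 0) (Set.mem_univ _) hne
    have hsub : (↑(Aset st q 0) : Set V) ⊆
        {y | y ∈ Set.univ ∧ ∃ p : (NCG.graph st).Walk (cs 0) y, c ∉ p.support ∧
          ∀ z ∈ p.support, z ∈ Set.univ} := by
      intro x hx
      rw [Finset.mem_coe, mem_Aset] at hx
      have hx' : (NCG.graph st).dist (cs 0) x < (NCG.graph st).dist c x := hx
      obtain ⟨p, hp, hpl⟩ := hconn.exists_path_of_dist (cs 0) x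
      refine ⟨Set.mem_univ _, p, ?_, fun z _ => Set.mem_univ _⟩
      intro hcs
      have hsp := dist_split hconn hpl hcs
      omega
    have hle := Set.ncard_le_ncard hsub (Set.toFinite _)
    rw [Set.ncard_coe_finset] at hle
    rw [Set.ncard_univ, Nat.card_eq_fintype_card] at hcb
    omega
  -- exponential decay of side sets
  have hHb := Hbound hα hself hstable htree hadjq hdistq hcent
  -- covering by Voronoi cells
  have hcover : ∀ x : V, (i < k → x ∉ Aset st q (i+1)) →
      ∃ j ∈ Finset.Icc 1 i, x ∈ vorF st cs k j := by
    intro x hxA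
    obtain ⟨p, hpdef⟩ : ∃ p, p = Nat.findGreatest (fun m => x ∈ Aset st q (m - 1)) (k+1) :=
      ⟨_, rfl⟩
    have hpk : p ≤ k + 1 := by rw [hpdef]; exact Nat.findGreatest_le _
    have hspec : p ≠ 0 → x ∈ Aset st q (p - 1) := fun h =>
      Nat.findGreatest_of_ne_zero hpdef.symm h
    have hgreat : ∀ m, p < m → m ≤ k + 1 → x ∉ Aset st q (m - 1) := by
      intro m h1 h2
      rw [hpdef] at h1
      exact Nat.findGreatest_is_greatest h1 h2
    have hpi : p ≤ i + 1 := by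
      by_contra hcon
      push_neg at hcon
      have hxp := hspec (by omega)
      by_cases hik' : i < k
      · exact hxA hik'
          (Aset_antitone htree hadjq hdistq (i+1) (p-1) (by omega) (by omega) hxp)
      · omega
    by_cases hp2 : p ≤ 1
    · refine ⟨1, Finset.mem_Icc.mpr ⟨le_refl 1, hi1⟩, ?_⟩
      rw [mem_vorF]
      intro l hl1 hlk hlj
      have hx2 : x ∉ Aset st q 1 := by
        have h := hgreat 2 (by omega) (by omega)
        norm_num at h
        exact h
      have hdd := dist_down htree hadjq hdistq (m := 1) hk1 hx2
      have ha := hdd 1 (by omega)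
      rw [show 1 + 1 = 2 from by omega] at ha
      have hb := hdd l (by omega)
      rw [show 1 + l = l + 1 from by omega] at hb
      have e1 : (NCG.graph st).dist (cs 1) x = (NCG.graph st).dist (q 2) x := rfl
      have e2 : (NCG.graph st).dist (cs l) x = (NCG.graph st).dist (q (l+1)) x := rfl
      omega
    · push_neg at hp2
      obtain ⟨n, rfl⟩ : ∃ n, p = n + 2 := ⟨p - 2, by omega⟩
      refine ⟨n + 1, Finset.mem_Icc.mpr ⟨by omega, by omega⟩, ?_⟩
      have hxp := hspec (by omega)
      rw [show n + 2 - 1 = n + 1 from by omega] at hxp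
      rw [mem_vorF]
      intro l hl1 hlk hlj
      have e1 : (NCG.graph st).dist (cs (n+1)) x = (NCG.graph st).dist (q (n+2)) x := rfl
      have e2 : (NCG.graph st).dist (cs l) x = (NCG.graph st).dist (q (l+1)) x := rfl
      rcases lt_or_ge l (n+1) with hl | hl
      · have hup := dist_up htree hadjq hdistq (p := n+1) (by omega) hxp
        have h := hup (n + 1 - l) (by omega)
        rw [show n + 1 + 1 - (n + 1 - l) = l + 1 from by omega] at h
        rw [show n + 1 + 1 = n + 2 from by omega] at h
        omega
      · have hl2 : n + 2 ≤ l := by omega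
        have hx2 : x ∉ Aset st q (n+2) := by
          have h := hgreat (n+3) (by omega) (by omega)
          rw [show n + 3 - 1 = n + 2 from by omega] at h
          exact h
        have hdd := dist_down htree hadjq hdistq (m := n+2) (by omega) hx2
        have h := hdd (l - n - 1) (by omega)
        rw [show n + 2 + (l - n - 1) = l + 1 from by omega] at h
        omega
  -- counting
  have hcount : Fintype.card V ≤
      (if i < k then (Aset st q (i+1)).card else 0) +
      ∑ j ∈ Finset.Icc 1 i, (vorF st cs k j).card := by
    set W : Finset V := if i < k then Aset st q (i+1) else ∅ with hWdef
    have hWcard : W.card = if i < k then (Aset st q (i+1)).card else 0 := by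
      rw [hWdef]
      split_ifs <;> simp
    have hsubU : (Finset.univ : Finset V) ⊆
        W ∪ (Finset.Icc 1 i).biUnion (fun j => vorF st cs k j) := by
      intro x _
      by_cases hxW : x ∈ W
      · exact Finset.mem_union_left _ hxW
      · have hx' : i < k → x ∉ Aset st q (i+1) := by
          intro hik' hmem
          apply hxW
          rw [hWdef, if_pos hik']
          exact hmem
        obtain ⟨j, hj, hxj⟩ := hcover x hx'
        exact Finset.mem_union_right _ (Finset.mem_biUnion.mpr ⟨j, hj, hxj⟩)
    calc Fintype.card V = (Finset.univ : Finset V).card := Finset.card_univ.symm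
      _ ≤ (W ∪ (Finset.Icc 1 i).biUnion (fun j => vorF st cs k j)).card :=
          Finset.card_le_card hsubU
      _ ≤ W.card + ((Finset.Icc 1 i).biUnion (fun j => vorF st cs k j)).card :=
          Finset.card_union_le _ _
      _ ≤ W.card + ∑ j ∈ Finset.Icc 1 i, (vorF st cs k j).card :=
          Nat.add_le_add_left Finset.card_biUnion_le _
      _ = _ := by rw [hWcard]
  have hWbound : 2 ^ i * (if i < k then (Aset st q (i+1)).card else 0) ≤ Fintype.card V := by
    split_ifs with h
    · have h1 := hHb (i+1) (by omega) (by omega)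
      have h2 : 2 ^ i * (Aset st q (i+1)).card ≤ 2 ^ (i+1) * (Aset st q (i+1)).card :=
        Nat.mul_le_mul_right _ (Nat.pow_le_pow_right (by omega) (by omega))
      omega
    · simp
  -- pass to the reals
  rw [geom_sum_Icc_half i]
  have hsum_eq : ∑ j ∈ Finset.Icc 1 i,
      (({x : V | ∀ l, 1 ≤ l → l ≤ k → l ≠ j →
        (NCG.graph st).dist (cs j) x < (NCG.graph st).dist (cs l) x}).ncard : ℝ)
      = ∑ j ∈ Finset.Icc 1 i, ((vorF st cs k j).card : ℝ) := by
    refine Finset.sum_congr rfl (fun j _ => ?_)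
    rw [ncard_vorF]
  rw [hsum_eq]
  set Wc : ℕ := if i < k then (Aset st q (i+1)).card else 0 with hWcdef
  have h1 : (Fintype.card V : ℝ) ≤ Wc + ∑ j ∈ Finset.Icc 1 i, ((vorF st cs k j).card : ℝ) := by
    exact_mod_cast hcount
  have h2 : (Wc : ℝ) * 2 ^ i ≤ Fintype.card V := by
    rw [Nat.mul_comm] at hWbound
    exact_mod_cast hWbound
  have hpow : (0:ℝ) < 2 ^ i := by positivity
  have h3 : (Wc : ℝ) ≤ (Fintype.card V : ℝ) / 2 ^ i := by
    rw [le_div_iff₀ hpow]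
    exact h2
  have h4 : (Fintype.card V : ℝ) * (1 - 1 / 2 ^ i) =
      (Fintype.card V : ℝ) - (Fintype.card V : ℝ) / 2 ^ i := by
    ring
  linarith
end
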